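/- arXiv:1811.02490 — 2 statements merged into one kernel-verified Lean document; each statement's English description precedes it below -/
import Mathlib

section
/- Let k ≥ 1 and let (Ψ, μ) be an indexed root ideal of length ℓ such that style(Ψ,μ)_i ≤ k for all i ∈ [ℓ]. Then the Catalan function H(Ψ;μ) lies in Λ^k = Span_{ℤ[t]}{H_ν(x;t) : ν ∈ Par^k}. -/
open scoped BigOperators Classical

noncomputable section

/-- The coefficient ring `ℤ[t]`, with `t = Polynomial.X`. -/
abbrev CR : Type := Polynomial ℤ

/-- The ring of symmetric functions `Λ = ℤ[t][h₁,h₂,…]`, modeled as the polynomial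
ring over `ℤ[t]` in countably many variables, where the variable `X n`
represents the complete homogeneous symmetric function `h_{n+1}`. -/
abbrev SymF : Type := MvPolynomial ℕ CR

/-- `t` as an element of `Λ`. -/
def tC : SymF := MvPolynomial.C Polynomial.X

/-- The complete homogeneous symmetric function `h_d` for `d : ℤ`:
`h_0 = 1` and `h_d = 0` for `d < 0`. -/
def hh (d : ℤ) : SymF :=
  if d < 0 then 0 else if d = 0 then 1 else MvPolynomial.X (d.toNat - 1)

/-- The (possibly non-partition-indexed) Schur function
`s_γ = det (h_{γ_i + j - i})_{1 ≤ i,j ≤ ℓ}`. -/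
def schur {ℓ : ℕ} (γ : Fin ℓ → ℤ) : SymF :=
  (Matrix.of fun i j : Fin ℓ => hh (γ i + (j : ℤ) - (i : ℤ))).det

/-- The poset of positive roots `Δ⁺_ℓ = {(i,j) : 1 ≤ i < j ≤ ℓ}` (0-based here). -/
def Dplus (ℓ : ℕ) : Finset (Fin ℓ × Fin ℓ) := Finset.univ.filter fun p => p.1 < p.2

/-- `Ψ` is a root ideal: an upper order ideal of `Δ⁺_ℓ`, where
`(a,b) ≤ (c,d)` iff `a ≥ c` and `b ≤ d`. -/
def IsRootIdeal {ℓ : ℕ} (Ψ : Finset (Fin ℓ × Fin ℓ)) : Prop :=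
  Ψ ⊆ Dplus ℓ ∧ ∀ p ∈ Ψ, ∀ q ∈ Dplus ℓ, q.1 ≤ p.1 → p.2 ≤ q.2 → q ∈ Ψ

/-- The Catalan function `H(Ψ;γ) = ∏_{(i,j) ∈ Ψ} (1 - t R_{ij})⁻¹ s_γ`, written out
as the (finitely supported) sum over all ways `n` of applying raising operators
`R_{ij}` with `(i,j) ∈ Ψ`. -/
def catalanFn {ℓ : ℕ} (Ψ : Finset (Fin ℓ × Fin ℓ)) (γ : Fin ℓ → ℤ) : SymF :=
  ∑ᶠ n : Fin ℓ × Fin ℓ → ℕ,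
    if ∀ p, p ∉ Ψ → n p = 0 then
      tC ^ (∑ p : Fin ℓ × Fin ℓ, n p) *
        schur (fun a => γ a + ∑ p : Fin ℓ × Fin ℓ,
          (n p : ℤ) * ((if p.1 = a then 1 else 0) - (if p.2 = a then 1 else 0)))
    else 0

/-- `nr(Ψ)_i`: the number of non-roots of `Ψ` in row `i` (0-based row index,
extended by `0` out of range). -/
def nrN {ℓ : ℕ} (Ψ : Finset (Fin ℓ × Fin ℓ)) (i : ℕ) : ℕ :=
  ((Dplus ℓ \ Ψ).filter fun p => (p.1 : ℕ) = i).card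

/-- `μ ∈ Par^k_ℓ`: a partition with at most `ℓ` parts, all of size at most `k`. -/
def IsPartitionK (k : ℕ) {ℓ : ℕ} (μ : Fin ℓ → ℕ) : Prop :=
  (∀ i j : Fin ℓ, i ≤ j → μ j ≤ μ i) ∧ ∀ i, μ i ≤ k

/-- The root ideal `Δᵏ(μ) = {(i,j) ∈ Δ⁺_ℓ : k - μ_i + i < j}` (1-based), here with
0-based indices. -/
def Dk (k : ℕ) {ℓ : ℕ} (μ : Fin ℓ → ℕ) : Finset (Fin ℓ × Fin ℓ) :=
  (Dplus ℓ).filter fun p => (k : ℤ) - μ p.1 + (p.1 : ℤ) < (p.2 : ℤ)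

/-- The `k`-Schur Catalan function `s^{(k)}_μ = H(Δᵏ(μ); μ)`. -/
def kSchur (k : ℕ) {ℓ : ℕ} (μ : Fin ℓ → ℕ) : SymF :=
  catalanFn (Dk k μ) fun i => (μ i : ℤ)

/-- The modified Hall–Littlewood polynomial `H_μ(x;t) = H(Δ⁺;μ)`. -/
def hallLittlewood {ℓ : ℕ} (μ : Fin ℓ → ℕ) : SymF :=
  catalanFn (Dplus ℓ) fun i => (μ i : ℤ)

/-- `Λᵏ`, the `ℤ[t]`-span of the modified Hall–Littlewood polynomials `H_μ`
for `μ ∈ Par^k`. -/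
def LambdaK (k : ℕ) : Submodule CR SymF :=
  Submodule.span CR {f | ∃ (ℓ : ℕ) (μ : Fin ℓ → ℕ),
    IsPartitionK k μ ∧ (∀ i, 0 < μ i) ∧ f = hallLittlewood μ}

/-- Extend a finite tuple by zeros. -/
def extendFin {ℓ : ℕ} (μ : Fin ℓ → ℕ) : ℕ → ℕ := fun i => if h : i < ℓ then μ ⟨i, h⟩ else 0

/-- Extend a finite integer tuple by zeros. -/
def extendFinZ {ℓ : ℕ} (γ : Fin ℓ → ℤ) : ℕ → ℤ := fun i => if h : i < ℓ then γ ⟨i, h⟩ else 0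

/-- `style(Ψ,γ)_i = nr(Ψ)_i + γ_i` (0-based row index `i`). -/
def styleZN {ℓ : ℕ} (Ψ : Finset (Fin ℓ × Fin ℓ)) (γ : Fin ℓ → ℤ) (i : ℕ) : ℤ :=
  (nrN Ψ i : ℤ) + extendFinZ γ i


namespace CatAux

variable {ℓ : ℕ}

def phi (n : Fin ℓ × Fin ℓ → ℕ) : Fin ℓ → ℤ :=
  fun a => ∑ p : Fin ℓ × Fin ℓ,
    (n p : ℤ) * ((if p.1 = a then 1 else 0) - (if p.2 = a then 1 else 0))

def term (Ψ : Finset (Fin ℓ × Fin ℓ)) (γ : Fin ℓ → ℤ) (n : Fin ℓ × Fin ℓ → ℕ) : SymF :=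
  if ∀ p, p ∉ Ψ → n p = 0 then
    tC ^ (∑ p : Fin ℓ × Fin ℓ, n p) * schur (fun a => γ a + phi n a)
  else 0

lemma catalanFn_eq (Ψ : Finset (Fin ℓ × Fin ℓ)) (γ : Fin ℓ → ℤ) :
    catalanFn Ψ γ = ∑ᶠ n, term Ψ γ n := rfl

lemma hh_neg {d : ℤ} (h : d < 0) : hh d = 0 := if_pos h

lemma schur_eq_zero {γ : Fin ℓ → ℤ} (j : Fin ℓ) (h : γ j + (ℓ : ℤ) - 1 - (j : ℤ) < 0) :
    schur γ = 0 := by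
  apply Matrix.det_eq_zero_of_row_eq_zero j
  intro j'
  apply hh_neg
  have : (j' : ℤ) ≤ (ℓ : ℤ) - 1 := by
    have := j'.isLt
    omega
  omega

lemma phi_weight (w : Fin ℓ → ℤ) (n : Fin ℓ × Fin ℓ → ℕ) :
    ∑ a, w a * phi n a = ∑ p : Fin ℓ × Fin ℓ, (n p : ℤ) * (w p.1 - w p.2) := by
  unfold phi
  simp only [Finset.mul_sum]
  rw [Finset.sum_comm]
  refine Finset.sum_congr rfl fun p _ => ?_
  have : ∀ a : Fin ℓ, w a * ((n p : ℤ) * ((if p.1 = a then 1 else 0) - if p.2 = a then 1 else 0))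
      = (n p : ℤ) * ((if p.1 = a then w a else 0) - if p.2 = a then w a else 0) := by
    intro a; split_ifs <;> ring
  rw [Finset.sum_congr rfl fun a _ => this a]
  rw [← Finset.mul_sum, Finset.sum_sub_distrib]
  simp [Finset.sum_ite_eq]

lemma sum_phi (n : Fin ℓ × Fin ℓ → ℕ) : ∑ a, phi n a = 0 := by
  have := phi_weight (fun _ => (1 : ℤ)) n
  simpa using this

lemma term_support_finite {Ψ : Finset (Fin ℓ × Fin ℓ)} (hΨ : Ψ ⊆ Dplus ℓ) (γ : Fin ℓ → ℤ) :
    (Function.support (term Ψ γ)).Finite := by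
  set G : ℤ := ∑ a, |γ a| with hG
  set S : ℤ := ∑ a, γ a with hS
  set D : ℤ := (ℓ : ℤ) + |S| + ℓ * ℓ with hD
  set B : ℤ := ℓ * (ℓ * D + G) with hB
  have hG0 : 0 ≤ G := Finset.sum_nonneg fun a _ => abs_nonneg _
  have key : ∀ n, term Ψ γ n ≠ 0 → ∀ p, (n p : ℤ) ≤ B := by
    intro n hn p
    have hcond : ∀ q, q ∉ Ψ → n q = 0 := by
      by_contra h; rw [term, if_neg h] at hn; exact hn rfl
    rw [term, if_pos hcond] at hn
    have hs : schur (fun a => γ a + phi n a) ≠ 0 := fun h => hn (by rw [h, mul_zero])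
    set δ : Fin ℓ → ℤ := fun a => γ a + phi n a with hδ
    have hlow : ∀ j, -(ℓ : ℤ) ≤ δ j := by
      intro j
      by_contra h
      push_neg at h
      refine hs (schur_eq_zero j ?_)
      have h1 : (0 : ℤ) ≤ (j : ℤ) := Int.ofNat_nonneg _
      omega
    have hsum : ∑ a, δ a = S := by
      rw [hδ, hS]
      rw [Finset.sum_add_distrib, sum_phi, add_zero]
    have hup : ∀ j, δ j ≤ S + ℓ * ℓ := by
      intro j
      have h1 : (Finset.univ.erase j).card • (-(ℓ : ℤ)) ≤ ∑ a ∈ Finset.univ.erase j, δ a :=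
        Finset.card_nsmul_le_sum _ _ _ fun a _ => hlow a
      have h2 : ∑ a ∈ Finset.univ.erase j, δ a = S - δ j := by
        rw [Finset.sum_erase_eq_sub (Finset.mem_univ j), hsum]
      have h3 : ((Finset.univ.erase j).card : ℤ) ≤ (ℓ : ℤ) := by
        have : (Finset.univ.erase j).card ≤ ℓ := by
          simpa using Finset.card_erase_le.trans (le_of_eq (by simp))
        exact_mod_cast this
      rw [h2, nsmul_eq_mul] at h1
      nlinarith [h1, h3, Int.ofNat_nonneg ℓ]
    have habs : ∀ j, |δ j| ≤ D := by
      intro j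
      have h1 := hlow j
      have h2 := hup j
      have h3 : 0 ≤ |S| := abs_nonneg S
      have h4 : S ≤ |S| := le_abs_self S
      rw [abs_le]
      constructor <;> nlinarith [Int.ofNat_nonneg ℓ]
    have hphiabs : ∀ a, phi n a = δ a - γ a := fun a => by rw [hδ]; ring
    have hge : (∑ q : Fin ℓ × Fin ℓ, (n q : ℤ)) ≤
        ∑ q : Fin ℓ × Fin ℓ, (n q : ℤ) * ((q.2 : ℤ) - (q.1 : ℤ)) := by
      refine Finset.sum_le_sum fun q _ => ?_
      by_cases h0 : n q = 0
      · simp [h0]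
      · have hq : q ∈ Dplus ℓ := hΨ (by by_contra hq; exact h0 (hcond q hq))
        have hlt : q.1 < q.2 := by simpa [Dplus] using hq
        have hlt' : (q.1 : ℤ) < (q.2 : ℤ) := by exact_mod_cast hlt
        have hn1 : (1 : ℤ) ≤ (n q : ℤ) := by exact_mod_cast Nat.one_le_iff_ne_zero.2 h0
        nlinarith
    have hw : ∑ q : Fin ℓ × Fin ℓ, (n q : ℤ) * ((q.2 : ℤ) - (q.1 : ℤ)) =
        ∑ a, ((ℓ : ℤ) - a) * phi n a := by
      rw [phi_weight]
      exact Finset.sum_congr rfl fun q _ => by ring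
    have hle : ∑ a, ((ℓ : ℤ) - a) * phi n a ≤ B := by
      have hterm : ∀ a : Fin ℓ, ((ℓ : ℤ) - a) * phi n a ≤ (ℓ : ℤ) * (D + |γ a|) := by
        intro a
        have hw0 : (0 : ℤ) ≤ (ℓ : ℤ) - a := by
          have := a.isLt
          have : (a : ℤ) < ℓ := by exact_mod_cast this
          omega
        have hw1 : (ℓ : ℤ) - a ≤ ℓ := by
          have : (0:ℤ) ≤ (a : ℤ) := Int.ofNat_nonneg _
          omega
        have hx : phi n a ≤ D + |γ a| := by
          rw [hphiabs]
          have := habs a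
          have h5 := abs_le.1 this
          have h6 := neg_abs_le (γ a)
          omega
        have hxb : (0:ℤ) ≤ D + |γ a| := by
          have := abs_nonneg (δ a)
          have := habs a
          have := abs_nonneg (γ a)
          omega
        calc ((ℓ : ℤ) - a) * phi n a ≤ ((ℓ : ℤ) - a) * (D + |γ a|) := by
              exact mul_le_mul_of_nonneg_left hx hw0
          _ ≤ (ℓ : ℤ) * (D + |γ a|) := mul_le_mul_of_nonneg_right hw1 hxb
      calc ∑ a, ((ℓ : ℤ) - a) * phi n a ≤ ∑ a : Fin ℓ, (ℓ : ℤ) * (D + |γ a|) :=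
            Finset.sum_le_sum fun a _ => hterm a
        _ = B := by
            rw [← Finset.mul_sum, Finset.sum_add_distrib, Finset.sum_const,
              Finset.card_univ, Fintype.card_fin, nsmul_eq_mul, hB, ← hG]
    have hsingle : (n p : ℤ) ≤ ∑ q : Fin ℓ × Fin ℓ, (n q : ℤ) :=
      Finset.single_le_sum (fun q _ => Int.ofNat_nonneg _) (Finset.mem_univ p)
    calc (n p : ℤ) ≤ _ := hsingle
      _ ≤ _ := hge
      _ = _ := hw
      _ ≤ B := hle
  have hsub : Function.support (term Ψ γ) ⊆
      Set.pi Set.univ fun _ : Fin ℓ × Fin ℓ => Set.Iic B.toNat := by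
    intro n hn p _
    have := key n hn p
    simp only [Set.mem_Iic]
    omega
  exact (Set.Finite.pi fun _ => Set.finite_Iic _).subset hsub

def addE (α : Fin ℓ × Fin ℓ) (γ : Fin ℓ → ℤ) : Fin ℓ → ℤ :=
  fun a => γ a + ((if α.1 = a then 1 else 0) - (if α.2 = a then 1 else 0))

lemma phi_succ (α : Fin ℓ × Fin ℓ) (m : Fin ℓ × Fin ℓ → ℕ) (a : Fin ℓ) :
    phi (fun p => m p + if p = α then 1 else 0) a
      = phi m a + ((if α.1 = a then 1 else 0) - (if α.2 = a then 1 else 0)) := by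
  unfold phi
  have h : ∀ p : Fin ℓ × Fin ℓ,
      ((m p + if p = α then 1 else 0 : ℕ) : ℤ) *
        ((if p.1 = a then 1 else 0) - if p.2 = a then 1 else 0)
      = (m p : ℤ) * ((if p.1 = a then 1 else 0) - if p.2 = a then 1 else 0)
        + (if p = α then ((if p.1 = a then (1:ℤ) else 0) - if p.2 = a then 1 else 0) else 0) := by
    intro p
    by_cases hp : p = α <;> simp [hp] <;> push_cast <;> ring
  rw [Finset.sum_congr rfl fun p _ => h p, Finset.sum_add_distrib]
  congr 1
  simp

lemma term_succ {Ψ : Finset (Fin ℓ × Fin ℓ)} (α : Fin ℓ × Fin ℓ) (hα : α ∈ Ψ)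
    (γ : Fin ℓ → ℤ) (m : Fin ℓ × Fin ℓ → ℕ) :
    term Ψ γ (fun p => m p + if p = α then 1 else 0) = tC * term Ψ (addE α γ) m := by
  unfold term
  have hiff : (∀ p, p ∉ Ψ → (m p + if p = α then 1 else 0) = 0) ↔ ∀ p, p ∉ Ψ → m p = 0 := by
    constructor
    · intro h p hp
      have := h p hp
      by_cases hpα : p = α
      · exact absurd (hpα ▸ hα) hp
      · simpa [hpα] using this
    · intro h p hp
      by_cases hpα : p = α
      · exact absurd (hpα ▸ hα) hp
      · simp [hpα, h p hp]
  by_cases hc : ∀ p, p ∉ Ψ → m p = 0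
  · rw [if_pos (hiff.2 hc), if_pos hc]
    have hsum : ∑ p : Fin ℓ × Fin ℓ, (m p + if p = α then 1 else 0) = (∑ p : Fin ℓ × Fin ℓ, m p) + 1 := by
      rw [Finset.sum_add_distrib]
      simp
    have hγ : (fun a => γ a + phi (fun p => m p + if p = α then 1 else 0) a)
        = fun a => addE α γ a + phi m a := by
      funext a
      rw [phi_succ]
      unfold addE
      ring
    rw [hsum, hγ, pow_succ]
    ring
  · rw [if_neg (fun h => hc (hiff.1 h)), if_neg hc, mul_zero]

lemma catalan_split {Ψ : Finset (Fin ℓ × Fin ℓ)} (hΨ : Ψ ⊆ Dplus ℓ) {α : Fin ℓ × Fin ℓ}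
    (hα : α ∈ Ψ) (γ : Fin ℓ → ℤ) :
    catalanFn Ψ γ = (∑ᶠ n, if n α = 0 then term Ψ γ n else 0)
      + tC * catalanFn Ψ (addE α γ) := by
  have hfin := term_support_finite hΨ γ
  have hfin2 := term_support_finite hΨ (addE α γ)
  have hfin0 : (Function.support fun n => if n α = 0 then term Ψ γ n else 0).Finite := by
    apply hfin.subset
    intro n hn
    simp only [Function.mem_support] at hn ⊢
    intro h
    apply hn
    rw [h]
    split <;> rfl
  have hfin1 : (Function.support fun n => if ¬ n α = 0 then term Ψ γ n else 0).Finite := by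
    apply hfin.subset
    intro n hn
    simp only [Function.mem_support] at hn ⊢
    intro h
    apply hn
    rw [h]
    split <;> rfl
  rw [catalanFn_eq]
  have hsplit : ∀ n, term Ψ γ n
      = (if n α = 0 then term Ψ γ n else 0) + (if ¬ n α = 0 then term Ψ γ n else 0) := by
    intro n
    by_cases h : n α = 0 <;> simp [h]
  rw [finsum_congr hsplit, finsum_add_distrib hfin0 hfin1]
  congr 1
  have hinj : Function.Injective
      (fun m : Fin ℓ × Fin ℓ → ℕ => fun p => m p + if p = α then 1 else 0) := by
    intro m₁ m₂ h
    funext p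
    have := congrFun h p
    simp only at this
    omega
  have hrange : {n : Fin ℓ × Fin ℓ → ℕ | ¬ n α = 0}
      = Set.range (fun m : Fin ℓ × Fin ℓ → ℕ => fun p => m p + if p = α then 1 else 0) := by
    ext n
    simp only [Set.mem_setOf_eq, Set.mem_range]
    constructor
    · intro h
      refine ⟨fun p => n p - if p = α then 1 else 0, ?_⟩
      funext p
      by_cases hp : p = α <;> simp [hp] <;> omega
    · rintro ⟨m, rfl⟩
      simp
  calc (∑ᶠ n, if ¬ n α = 0 then term Ψ γ n else 0)
      = ∑ᶠ n, Set.indicator {n : Fin ℓ × Fin ℓ → ℕ | ¬ n α = 0} (term Ψ γ) n := by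
        apply finsum_congr
        intro n
        rw [Set.indicator_apply]
        by_cases h : n α = 0 <;> simp [h]
    _ = ∑ᶠ n ∈ {n : Fin ℓ × Fin ℓ → ℕ | ¬ n α = 0}, term Ψ γ n := (finsum_mem_def _ _).symm
    _ = ∑ᶠ m, term Ψ γ (fun p => m p + if p = α then 1 else 0) := by
        rw [hrange, finsum_mem_range hinj]
    _ = ∑ᶠ m, tC * term Ψ (addE α γ) m := finsum_congr fun m => term_succ α hα γ m
    _ = tC * catalanFn Ψ (addE α γ) := by
        rw [catalanFn_eq]
        exact (mul_finsum _ _).symm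

lemma catalan_insert {Ψ : Finset (Fin ℓ × Fin ℓ)} {α : Fin ℓ × Fin ℓ}
    (hins : insert α Ψ ⊆ Dplus ℓ) (hα : α ∉ Ψ) (γ : Fin ℓ → ℤ) :
    catalanFn (insert α Ψ) γ
      = catalanFn Ψ γ + tC * catalanFn (insert α Ψ) (addE α γ) := by
  rw [catalan_split hins (Finset.mem_insert_self α Ψ) γ]
  congr 1
  rw [catalanFn_eq]
  apply finsum_congr
  intro n
  by_cases h : n α = 0
  · rw [if_pos h]
    unfold term
    have hiff : (∀ p, p ∉ insert α Ψ → n p = 0) ↔ (∀ p, p ∉ Ψ → n p = 0) := by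
      constructor
      · intro hc p hp
        by_cases hpα : p = α
        · rw [hpα]; exact h
        · exact hc p (by simp [Finset.mem_insert, hpα, hp])
      · intro hc p hp
        exact hc p fun hm => hp (Finset.mem_insert_of_mem hm)
    by_cases hc : ∀ p, p ∉ Ψ → n p = 0
    · rw [if_pos (hiff.2 hc), if_pos hc]
    · rw [if_neg (fun hx => hc (hiff.1 hx)), if_neg hc]
  · rw [if_neg h]
    symm
    unfold term
    rw [if_neg]
    intro hc
    exact h (hc α hα)

lemma mem_Dplus_iff {p : Fin ℓ × Fin ℓ} : p ∈ Dplus ℓ ↔ p.1 < p.2 := by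
  simp [Dplus]

lemma schur_swap {i₀ i₁ : Fin ℓ} (h : (i₀ : ℕ) + 1 = (i₁ : ℕ)) (δ : Fin ℓ → ℤ) :
    schur δ
      = - schur (fun a => if a = i₀ then δ i₁ - 1 else if a = i₁ then δ i₀ + 1 else δ a) := by
  have hne : i₀ ≠ i₁ := by
    intro he
    rw [he] at h
    omega
  have key : (Matrix.of fun i j : Fin ℓ =>
        hh ((if i = i₀ then δ i₁ - 1 else if i = i₁ then δ i₀ + 1 else δ i) + (j : ℤ) - (i : ℤ)))
      = (Matrix.of fun i j : Fin ℓ => hh (δ i + (j : ℤ) - (i : ℤ))).submatrix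
          (Equiv.swap i₀ i₁) id := by
    ext i j
    simp only [Matrix.submatrix_apply, Matrix.of_apply, id]
    have hc : ((i₀ : ℕ) : ℤ) + 1 = ((i₁ : ℕ) : ℤ) := by exact_mod_cast h
    by_cases h0 : i = i₀
    · rw [h0, if_pos rfl, Equiv.swap_apply_left]
      have harg : δ i₁ - 1 + ((j : ℕ) : ℤ) - ((i₀ : ℕ) : ℤ)
          = δ i₁ + ((j : ℕ) : ℤ) - ((i₁ : ℕ) : ℤ) := by linarith
      rw [harg]
    · by_cases h1 : i = i₁
      · rw [h1, if_neg (fun he => hne he.symm), if_pos rfl, Equiv.swap_apply_right]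
        have harg : δ i₀ + 1 + ((j : ℕ) : ℤ) - ((i₁ : ℕ) : ℤ)
            = δ i₀ + ((j : ℕ) : ℤ) - ((i₀ : ℕ) : ℤ) := by linarith
        rw [harg]
      · rw [if_neg h0, if_neg h1, Equiv.swap_apply_of_ne_of_ne h0 h1]
  unfold schur
  rw [key, Matrix.det_permute, Equiv.Perm.sign_swap hne]
  simp only [Units.val_neg, Units.val_one, Int.cast_neg, Int.cast_one, Int.reduceNeg,
    neg_mul, one_mul, neg_neg]
  ring

def iotaFun (i₀ i₁ : Fin ℓ) (p : Fin ℓ × Fin ℓ) : Fin ℓ × Fin ℓ :=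
  if p.1 < p.2 then
    (if Equiv.swap i₀ i₁ p.1 < Equiv.swap i₀ i₁ p.2
      then (Equiv.swap i₀ i₁ p.1, Equiv.swap i₀ i₁ p.2)
      else (Equiv.swap i₀ i₁ p.2, Equiv.swap i₀ i₁ p.1))
  else p

lemma iotaFun_involutive (i₀ i₁ : Fin ℓ) : Function.Involutive (iotaFun i₀ i₁) := by
  intro p
  set σ := Equiv.swap i₀ i₁ with hσ
  have hσσ : ∀ a, σ (σ a) = a := fun a => Equiv.swap_apply_self _ _ _
  unfold iotaFun
  by_cases h : p.1 < p.2
  · rw [if_pos h]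
    by_cases h2 : σ p.1 < σ p.2
    · rw [if_pos h2]
      simp only [← hσ]
      rw [if_pos h2, if_pos (by rw [hσσ, hσσ]; exact h)]
      simp [hσσ]
    · rw [if_neg h2]
      have hne : σ p.2 ≠ σ p.1 := fun he => (ne_of_lt h) (σ.injective he).symm
      have h3 : σ p.2 < σ p.1 := lt_of_le_of_ne (not_lt.1 h2) hne
      simp only [← hσ]
      rw [if_pos h3, if_neg (by rw [hσσ, hσσ]; exact not_lt.2 (le_of_lt h))]
      simp [hσσ]
  · rw [if_neg h, if_neg h]

def iota (i₀ i₁ : Fin ℓ) : Equiv.Perm (Fin ℓ × Fin ℓ) :=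
  Function.Involutive.toPerm _ (iotaFun_involutive i₀ i₁)

lemma iota_apply (i₀ i₁ : Fin ℓ) (p : Fin ℓ × Fin ℓ) : iota i₀ i₁ p = iotaFun i₀ i₁ p := rfl

lemma iota_fix {i₀ i₁ : Fin ℓ} {p : Fin ℓ × Fin ℓ} (h : ¬ p.1 < p.2) :
    iotaFun i₀ i₁ p = p := if_neg h

lemma iota_alpha {i₀ i₁ : Fin ℓ} (hadj : (i₀ : ℕ) + 1 = (i₁ : ℕ)) :
    iotaFun i₀ i₁ (i₀, i₁) = (i₀, i₁) := by
  have hlt : i₀ < i₁ := by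
    rw [Fin.lt_def]
    omega
  unfold iotaFun
  rw [if_pos hlt]
  simp only [Equiv.swap_apply_left, Equiv.swap_apply_right]
  rw [if_neg (not_lt.2 (le_of_lt hlt))]

lemma iota_swap {i₀ i₁ : Fin ℓ} (hadj : (i₀ : ℕ) + 1 = (i₁ : ℕ)) {p : Fin ℓ × Fin ℓ}
    (h : p.1 < p.2) (hne : p ≠ (i₀, i₁)) :
    iotaFun i₀ i₁ p = (Equiv.swap i₀ i₁ p.1, Equiv.swap i₀ i₁ p.2) := by
  have key : Equiv.swap i₀ i₁ p.1 < Equiv.swap i₀ i₁ p.2 := by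
    by_cases c1 : p.1 = i₀
    · by_cases c2 : p.2 = i₁
      · exact absurd (Prod.ext c1 c2) hne
      · have c3 : p.2 ≠ i₀ := by
          intro he
          rw [c1, he] at h
          exact lt_irrefl _ h
        rw [c1, Equiv.swap_apply_left, Equiv.swap_apply_of_ne_of_ne c3 c2]
        rw [Fin.lt_def]
        have := Fin.lt_def.1 h
        rw [c1] at this
        have h2 := Fin.val_ne_of_ne c2
        omega
    · by_cases c2 : p.1 = i₁
      · have c3 : p.2 ≠ i₀ := by
          intro he
          have := Fin.lt_def.1 h
          rw [c2, he] at this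
          omega
        have c4 : p.2 ≠ i₁ := by
          intro he
          rw [c2, he] at h
          exact lt_irrefl _ h
        rw [c2, Equiv.swap_apply_right, Equiv.swap_apply_of_ne_of_ne c3 c4]
        rw [Fin.lt_def]
        have := Fin.lt_def.1 h
        rw [c2] at this
        omega
      · rw [Equiv.swap_apply_of_ne_of_ne c1 c2]
        by_cases c3 : p.2 = i₀
        · rw [c3, Equiv.swap_apply_left, Fin.lt_def]
          have := Fin.lt_def.1 h
          rw [c3] at this
          omega
        · by_cases c4 : p.2 = i₁
          · rw [c4, Equiv.swap_apply_right, Fin.lt_def]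
            have := Fin.lt_def.1 h
            rw [c4] at this
            have h1 := Fin.val_ne_of_ne c1
            omega
          · rw [Equiv.swap_apply_of_ne_of_ne c3 c4]
            exact h
  unfold iotaFun
  rw [if_pos h, if_pos key]

lemma phi_iota {i₀ i₁ : Fin ℓ} (hadj : (i₀ : ℕ) + 1 = (i₁ : ℕ)) {n : Fin ℓ × Fin ℓ → ℕ}
    (hn : ∀ p, p ∉ Dplus ℓ → n p = 0) (h0 : n (i₀, i₁) = 0) (a : Fin ℓ) :
    phi (fun p => n (iotaFun i₀ i₁ p)) a = phi n (Equiv.swap i₀ i₁ a) := by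
  unfold phi
  have hre := Equiv.sum_comp (iota i₀ i₁)
    (fun p : Fin ℓ × Fin ℓ => ((n (iotaFun i₀ i₁ p) : ℤ) *
      ((if p.1 = a then 1 else 0) - if p.2 = a then 1 else 0)))
  rw [← hre]
  refine Finset.sum_congr rfl fun q _ => ?_
  rw [iota_apply, iotaFun_involutive i₀ i₁ q]
  by_cases hq0 : n q = 0
  · rw [hq0]
    simp
  · have hq : q ∈ Dplus ℓ := by
      by_contra hq
      exact hq0 (hn q hq)
    have hqα : q ≠ (i₀, i₁) := fun he => hq0 (he ▸ h0)
    rw [iota_swap hadj (mem_Dplus_iff.1 hq) hqα]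
    simp only
    congr 1
    rw [if_congr Equiv.swap_apply_eq_iff rfl rfl, if_congr Equiv.swap_apply_eq_iff rfl rfl]

def stv (i₀ i₁ : Fin ℓ) (γ : Fin ℓ → ℤ) : Fin ℓ → ℤ :=
  fun a => if a = i₀ then γ i₁ - 1 else if a = i₁ then γ i₀ + 1 else γ a

lemma star_aux {i₀ i₁ : Fin ℓ} (hadj : (i₀ : ℕ) + 1 = (i₁ : ℕ)) (γ : Fin ℓ → ℤ) :
    (∑ᶠ n, if n (i₀, i₁) = 0 then term (Dplus ℓ) (stv i₀ i₁ γ) n else 0)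
      = - ∑ᶠ n, if n (i₀, i₁) = 0 then term (Dplus ℓ) γ n else 0 := by
  set σ := Equiv.swap i₀ i₁ with hσ
  set e : (Fin ℓ × Fin ℓ → ℕ) ≃ (Fin ℓ × Fin ℓ → ℕ) :=
    Equiv.arrowCongr (iota i₀ i₁) (Equiv.refl ℕ) with he
  have he_app : ∀ (n : Fin ℓ × Fin ℓ → ℕ) (p), e n p = n (iotaFun i₀ i₁ p) := by
    intro n p
    rfl
  rw [← finsum_comp_equiv e]
  rw [← finsum_neg_distrib]
  apply finsum_congr
  intro n
  rw [he_app, iota_alpha hadj]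
  by_cases h0 : n (i₀, i₁) = 0
  case neg => rw [if_neg h0, if_neg h0, neg_zero]
  case pos =>
      rw [if_pos h0, if_pos h0]
      unfold term
      have hcond : (∀ p, p ∉ Dplus ℓ → e n p = 0) ↔ ∀ p, p ∉ Dplus ℓ → n p = 0 := by
        constructor
        · intro hc p hp
          have := hc p hp
          rwa [he_app, iota_fix (fun hlt => hp (mem_Dplus_iff.2 hlt))] at this
        · intro hc p hp
          rw [he_app, iota_fix (fun hlt => hp (mem_Dplus_iff.2 hlt))]
          exact hc p hp
      by_cases hc : ∀ p, p ∉ Dplus ℓ → n p = 0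
      · rw [if_pos (hcond.2 hc), if_pos hc]
        have hsum : ∑ p : Fin ℓ × Fin ℓ, e n p = ∑ p : Fin ℓ × Fin ℓ, n p := by
          calc ∑ p : Fin ℓ × Fin ℓ, e n p
              = ∑ p : Fin ℓ × Fin ℓ, n (iota i₀ i₁ p) :=
                Finset.sum_congr rfl fun p _ => he_app n p
            _ = ∑ p : Fin ℓ × Fin ℓ, n p := Equiv.sum_comp (iota i₀ i₁) n
        rw [hsum]
        have hφ : (fun a => stv i₀ i₁ γ a + phi (e n) a)
            = fun a => if a = i₀ then (γ i₁ + phi n i₁) - 1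
                else if a = i₁ then (γ i₀ + phi n i₀) + 1 else γ a + phi n a := by
          funext a
          have : phi (e n) a = phi n (σ a) := phi_iota hadj hc h0 a
          rw [this]
          unfold stv
          by_cases ha0 : a = i₀
          · subst ha0
            rw [if_pos rfl, if_pos rfl, hσ, Equiv.swap_apply_left]
            ring
          · by_cases ha1 : a = i₁
            · subst ha1
              rw [if_neg ha0, if_pos rfl, if_neg ha0, if_pos rfl, hσ, Equiv.swap_apply_right]
              ring
            · rw [if_neg ha0, if_neg ha1, if_neg ha0, if_neg ha1, hσ,
                Equiv.swap_apply_of_ne_of_ne ha0 ha1]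
        rw [hφ]
        rw [schur_swap hadj (fun a => γ a + phi n a)]
        ring
      · rw [if_neg (fun hx => hc (hcond.1 hx)), if_neg hc, neg_zero]

lemma star {i₀ i₁ : Fin ℓ} (hadj : (i₀ : ℕ) + 1 = (i₁ : ℕ)) (γ : Fin ℓ → ℤ) :
    catalanFn (Dplus ℓ) γ + catalanFn (Dplus ℓ) (stv i₀ i₁ γ)
      = tC * catalanFn (Dplus ℓ) (addE (i₀, i₁) γ)
        + tC * catalanFn (Dplus ℓ) (addE (i₀, i₁) (stv i₀ i₁ γ)) := by
  have hmem : (i₀, i₁) ∈ Dplus ℓ := by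
    rw [mem_Dplus_iff]
    show i₀ < i₁
    rw [Fin.lt_def]
    omega
  rw [catalan_split (le_refl _) hmem γ, catalan_split (le_refl _) hmem (stv i₀ i₁ γ)]
  rw [star_aux hadj γ]
  ring

lemma schur_strip {m : ℕ} (γ : Fin (m + 1) → ℤ) (h : γ (Fin.last m) = 0) :
    schur γ = schur (γ ∘ Fin.castSucc) := by
  unfold schur
  rw [Matrix.det_succ_row _ (Fin.last m)]
  rw [Finset.sum_eq_single (Fin.last m)]
  · simp only [Matrix.of_apply]
    have h1 : hh (γ (Fin.last m) + ((Fin.last m : ℕ) : ℤ) - ((Fin.last m : ℕ) : ℤ)) = 1 := by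
      rw [h]
      norm_num [hh]
    rw [h1]
    have h2 : ((-1 : SymF)) ^ ((Fin.last m : ℕ) + (Fin.last m : ℕ)) = 1 := by
      rw [← two_mul, pow_mul]
      norm_num
    rw [h2, one_mul, one_mul]
    congr 1
    ext i j
    simp only [Matrix.submatrix_apply, Matrix.of_apply, Fin.succAbove_last, Function.comp_apply]
    congr 2 <;> simp
  · intro j _ hj
    have hz : hh (γ (Fin.last m) + ((j : ℕ) : ℤ) - ((Fin.last m : ℕ) : ℤ)) = 0 := by
      apply hh_neg
      rw [h]
      have h3 := j.isLt
      have h4 : (j : ℕ) ≠ m := by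
        intro he
        exact hj (Fin.ext (by simp [he]))
      simp only [Fin.val_last]
      omega
    simp only [Matrix.of_apply]
    rw [hz]
    ring
  · intro hmem
    exact absurd (Finset.mem_univ _) hmem

lemma phi_nonpos_last {m : ℕ} {n : Fin (m + 1) × Fin (m + 1) → ℕ}
    (hc : ∀ p, p ∉ Dplus (m + 1) → n p = 0) :
    phi n (Fin.last m) ≤ 0 := by
  apply Finset.sum_nonpos
  intro p _
  by_cases hnp : n p = 0
  · simp [hnp]
  · have hp : p ∈ Dplus (m + 1) := by
      by_contra hp
      exact hnp (hc p hp)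
    have hlt : p.1 < p.2 := mem_Dplus_iff.1 hp
    have hne1 : p.1 ≠ Fin.last m := by
      intro he
      have := Fin.lt_def.1 hlt
      rw [he] at this
      have := p.2.isLt
      simp only [Fin.val_last] at *
      omega
    rw [if_neg hne1]
    have : (0:ℤ) - (if p.2 = Fin.last m then 1 else 0) ≤ 0 := by
      split <;> norm_num
    have hn0 : (0:ℤ) ≤ (n p : ℤ) := Int.ofNat_nonneg _
    nlinarith [this, hn0]

lemma catalan_last_neg {m : ℕ} {γ : Fin (m + 1) → ℤ} (h : γ (Fin.last m) < 0) :
    catalanFn (Dplus (m + 1)) γ = 0 := by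
  rw [catalanFn_eq]
  have hz : ∀ n, term (Dplus (m + 1)) γ n = 0 := by
    intro n
    unfold term
    by_cases hc : ∀ p, p ∉ Dplus (m + 1) → n p = 0
    · rw [if_pos hc]
      have h1 : phi n (Fin.last m) ≤ 0 := phi_nonpos_last hc
      rw [schur_eq_zero (Fin.last m) (by simp only [Fin.val_last]; push_cast; omega), mul_zero]
    · rw [if_neg hc]
  rw [finsum_congr hz, finsum_zero]

lemma catalan_strip {m : ℕ} (γ : Fin (m + 1) → ℤ) (h : γ (Fin.last m) = 0) :
    catalanFn (Dplus (m + 1)) γ = catalanFn (Dplus m) (γ ∘ Fin.castSucc) := by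
  rw [catalanFn_eq, catalanFn_eq]
  set T := term (Dplus (m + 1)) γ with hT
  have hstep1 : ∀ n, T n = if (∀ i : Fin (m + 1), n (i, Fin.last m) = 0) then T n else 0 := by
    intro n
    by_cases hz : ∀ i : Fin (m + 1), n (i, Fin.last m) = 0
    · rw [if_pos hz]
    · rw [if_neg hz]
      push_neg at hz
      obtain ⟨i, hi⟩ := hz
      rw [hT]
      unfold term
      by_cases hc : ∀ p, p ∉ Dplus (m + 1) → n p = 0
      · rw [if_pos hc]
        have hilt : (i, Fin.last m) ∈ Dplus (m + 1) := by
          by_contra hmem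
          exact hi (hc _ hmem)
        have hine : i ≠ Fin.last m := by
          intro he
          rw [he] at hilt
          exact lt_irrefl _ (mem_Dplus_iff.1 hilt)
        have h1 : phi n (Fin.last m) < 0 := by
          have hle : ∀ p ∈ (Finset.univ : Finset (Fin (m+1) × Fin (m+1))),
              (n p : ℤ) * ((if p.1 = Fin.last m then 1 else 0)
                - if p.2 = Fin.last m then 1 else 0) ≤ 0 := by
            intro p _
            by_cases hnp : n p = 0
            · simp [hnp]
            · have hp : p ∈ Dplus (m + 1) := by
                by_contra hp
                exact hnp (hc p hp)
              have hlt : p.1 < p.2 := mem_Dplus_iff.1 hp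
              have hne1 : p.1 ≠ Fin.last m := by
                intro he
                have h5 := Fin.lt_def.1 hlt
                rw [he] at h5
                have := p.2.isLt
                simp only [Fin.val_last] at *
                omega
              rw [if_neg hne1]
              have h6 : (0:ℤ) - (if p.2 = Fin.last m then 1 else 0) ≤ 0 := by
                split <;> norm_num
              have hn0 : (0:ℤ) ≤ (n p : ℤ) := Int.ofNat_nonneg _
              nlinarith
          have hstrict : ∃ p ∈ (Finset.univ : Finset (Fin (m+1) × Fin (m+1))),
              (n p : ℤ) * ((if p.1 = Fin.last m then 1 else 0)
                - if p.2 = Fin.last m then 1 else 0) < 0 := by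
            refine ⟨(i, Fin.last m), Finset.mem_univ _, ?_⟩
            simp only [if_neg hine, if_pos rfl, if_true]
            have h7 : (1:ℤ) ≤ (n (i, Fin.last m) : ℤ) := by
              exact_mod_cast Nat.one_le_iff_ne_zero.2 hi
            linarith
          calc phi n (Fin.last m)
              < ∑ _p : Fin (m+1) × Fin (m+1), (0:ℤ) := Finset.sum_lt_sum hle hstrict
            _ = 0 := by simp
        rw [schur_eq_zero (Fin.last m)
          (by simp only [Fin.val_last]; rw [h]; push_cast; omega), mul_zero]
      · rw [if_neg hc]
  rw [finsum_congr hstep1]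
  set inc : (Fin m × Fin m → ℕ) → (Fin (m + 1) × Fin (m + 1) → ℕ) :=
    fun n' p => if hp : (p.1 : ℕ) < m ∧ (p.2 : ℕ) < m then n' (⟨p.1, hp.1⟩, ⟨p.2, hp.2⟩) else 0
    with hinc
  have hinc_apply : ∀ (n' : Fin m × Fin m → ℕ) (q : Fin m × Fin m),
      inc n' (Fin.castSucc q.1, Fin.castSucc q.2) = n' q := by
    intro n' q
    rw [hinc]
    simp only
    rw [dif_pos ⟨by simpa using q.1.isLt, by simpa using q.2.isLt⟩]
    all_goals congr 1
    all_goals exact Prod.ext (Fin.ext (by simp)) (Fin.ext (by simp))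
  have hinj : Function.Injective inc := by
    intro a b hab
    funext q
    have := congrFun hab (Fin.castSucc q.1, Fin.castSucc q.2)
    rwa [hinc_apply, hinc_apply] at this
  have hsum_inc : ∀ n' : Fin m × Fin m → ℕ, ∀ f : Fin (m+1) × Fin (m+1) → Fin m × Fin m → ℤ,
      True := fun _ _ => trivial
  -- reduction of sums over the big index set to the small one
  have hres : ∀ (n' : Fin m × Fin m → ℕ) (g : (Fin (m+1) × Fin (m+1)) → ℕ → ℤ),
      (∀ p, ¬ ((p.1 : ℕ) < m ∧ (p.2 : ℕ) < m) → g p 0 = 0) →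
      ∑ p : Fin (m+1) × Fin (m+1), g p (inc n' p)
        = ∑ q : Fin m × Fin m, g (Fin.castSucc q.1, Fin.castSucc q.2) (n' q) := by
    intro n' g hg
    have hemb : Function.Injective
        (fun q : Fin m × Fin m => ((Fin.castSucc q.1, Fin.castSucc q.2) :
          Fin (m+1) × Fin (m+1))) := by
      intro a b hab
      simp only [Prod.mk.injEq] at hab
      exact Prod.ext (Fin.castSucc_injective m hab.1) (Fin.castSucc_injective m hab.2)
    calc ∑ p : Fin (m+1) × Fin (m+1), g p (inc n' p)
        = ∑ p ∈ Finset.univ.map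
            (⟨fun q : Fin m × Fin m => ((Fin.castSucc q.1, Fin.castSucc q.2) :
              Fin (m+1) × Fin (m+1)), hemb⟩ : (Fin m × Fin m) ↪ (Fin (m+1) × Fin (m+1))),
            g p (inc n' p) := by
          symm
          apply Finset.sum_subset (Finset.subset_univ _)
          intro p _ hp
          have hbox : ¬ ((p.1 : ℕ) < m ∧ (p.2 : ℕ) < m) := by
            intro hb
            apply hp
            simp only [Finset.mem_map, Finset.mem_univ, Function.Embedding.coeFn_mk, true_and]
            exact ⟨(⟨p.1, hb.1⟩, ⟨p.2, hb.2⟩), Prod.ext (Fin.ext (by simp)) (Fin.ext (by simp))⟩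
          have hzero : inc n' p = 0 := by
            rw [hinc]
            simp only
            rw [dif_neg hbox]
          rw [hzero]
          exact hg p hbox
      _ = ∑ q : Fin m × Fin m,
            g (Fin.castSucc q.1, Fin.castSucc q.2) (inc n' (Fin.castSucc q.1, Fin.castSucc q.2)) :=
          Finset.sum_map _ _ _
      _ = ∑ q : Fin m × Fin m, g (Fin.castSucc q.1, Fin.castSucc q.2) (n' q) :=
          Finset.sum_congr rfl fun q _ => by rw [hinc_apply]
  have key2 : ∀ n' : Fin m × Fin m → ℕ,
      (if (∀ i : Fin (m+1), inc n' (i, Fin.last m) = 0) then T (inc n') else 0)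
        = term (Dplus m) (γ ∘ Fin.castSucc) n' := by
    intro n'
    have hzlast : ∀ i : Fin (m+1), inc n' (i, Fin.last m) = 0 := by
      intro i
      rw [hinc]
      simp only
      rw [dif_neg (by simp)]
    rw [if_pos hzlast, hT]
    unfold term
    have hcond : (∀ p, p ∉ Dplus (m+1) → inc n' p = 0) ↔ ∀ q, q ∉ Dplus m → n' q = 0 := by
      constructor
      · intro hc q hq
        have hnot : ((Fin.castSucc q.1, Fin.castSucc q.2) : Fin (m+1) × Fin (m+1))
            ∉ Dplus (m+1) := by
          rw [mem_Dplus_iff]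
          simp only [not_lt] at *
          rw [mem_Dplus_iff, not_lt] at hq
          exact Fin.castSucc_le_castSucc_iff.2 hq
        have := hc _ hnot
        rwa [hinc_apply] at this
      · intro hc p hp
        rw [hinc]
        simp only
        by_cases hbox : (p.1 : ℕ) < m ∧ (p.2 : ℕ) < m
        · rw [dif_pos hbox]
          apply hc
          rw [mem_Dplus_iff, not_lt]
          rw [mem_Dplus_iff, not_lt] at hp
          rw [Fin.le_def]
          exact Fin.le_def.1 hp
        · rw [dif_neg hbox]
    by_cases hc : ∀ q, q ∉ Dplus m → n' q = 0
    · rw [if_pos (hcond.2 hc), if_pos hc]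
      have hsum : ∑ p : Fin (m+1) × Fin (m+1), inc n' p = ∑ q : Fin m × Fin m, n' q := by
        have := hres n' (fun _ v => (v : ℤ)) (fun _ _ => rfl)
        exact_mod_cast this
      rw [hsum]
      congr 1
      have hphi : ∀ a : Fin m, phi (inc n') (Fin.castSucc a) = phi n' a := by
        intro a
        unfold phi
        rw [hres n' (fun p v => (v : ℤ) * ((if p.1 = Fin.castSucc a then 1 else 0)
          - if p.2 = Fin.castSucc a then 1 else 0)) (fun p _ => by norm_num)]
        refine Finset.sum_congr rfl fun q _ => ?_
        congr 1
        rw [if_congr Fin.castSucc_inj rfl rfl, if_congr Fin.castSucc_inj rfl rfl]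
      have hphilast : phi (inc n') (Fin.last m) = 0 := by
        unfold phi
        rw [hres n' (fun p v => (v : ℤ) * ((if p.1 = Fin.last m then 1 else 0)
          - if p.2 = Fin.last m then 1 else 0)) (fun p _ => by norm_num)]
        apply Finset.sum_eq_zero
        intro q _
        rw [if_neg (Fin.castSucc_lt_last q.1).ne, if_neg (Fin.castSucc_lt_last q.2).ne]
        ring
      rw [schur_strip (fun a => γ a + phi (inc n') a)
        (by show γ (Fin.last m) + phi (inc n') (Fin.last m) = 0; rw [h, hphilast, add_zero])]
      congr 1
      funext a
      simp only [Function.comp_apply]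
      rw [hphi]
    · rw [if_neg (fun hx => hc (hcond.1 hx)), if_neg hc]
  calc ∑ᶠ n, (if (∀ i : Fin (m+1), n (i, Fin.last m) = 0) then T n else 0)
      = ∑ᶠ n, Set.indicator (Set.range inc)
          (fun n => if (∀ i : Fin (m+1), n (i, Fin.last m) = 0) then T n else 0) n := by
        apply finsum_congr
        intro n
        by_cases hn : n ∈ Set.range inc
        · rw [Set.indicator_of_mem hn]
        · rw [Set.indicator_of_notMem hn]
          by_cases hz : ∀ i : Fin (m+1), n (i, Fin.last m) = 0
          · rw [if_pos hz]
            rw [hT]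
            unfold term
            by_cases hc : ∀ p, p ∉ Dplus (m+1) → n p = 0
            · exfalso
              apply hn
              refine ⟨fun q => n (Fin.castSucc q.1, Fin.castSucc q.2), ?_⟩
              funext p
              rw [hinc]
              simp only
              by_cases hbox : (p.1 : ℕ) < m ∧ (p.2 : ℕ) < m
              · rw [dif_pos hbox]
                all_goals congr 1
                all_goals exact Prod.ext (Fin.ext (by simp)) (Fin.ext (by simp))
              · rw [dif_neg hbox]
                rcases not_and_or.1 hbox with hb | hb
                · refine (hc p ?_).symm
                  rw [mem_Dplus_iff, not_lt, Fin.le_def]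
                  have h1 := p.1.isLt
                  have h2 := p.2.isLt
                  omega
                · have hp2 : p.2 = Fin.last m := by
                    apply Fin.ext
                    have := p.2.isLt
                    simp only [Fin.val_last]
                    omega
                  have h9 := hz p.1
                  rw [← hp2] at h9
                  exact (show n (p.1, p.2) = 0 from h9).symm
            · rw [if_neg hc]
          · rw [if_neg hz]
    _ = ∑ᶠ n ∈ Set.range inc,
          (if (∀ i : Fin (m+1), n (i, Fin.last m) = 0) then T n else 0) :=
        (finsum_mem_def _ _).symm
    _ = ∑ᶠ n', (if (∀ i : Fin (m+1), inc n' (i, Fin.last m) = 0) then T (inc n') else 0) :=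
        finsum_mem_range hinj
    _ = ∑ᶠ n', term (Dplus m) (γ ∘ Fin.castSucc) n' := finsum_congr key2

def LambdaK' (k : ℕ) : Submodule CR SymF :=
  Submodule.span CR {f | ∃ (ℓ : ℕ) (μ : Fin ℓ → ℕ),
    ((∀ i j : Fin ℓ, i ≤ j → μ j ≤ μ i) ∧ ∀ i, μ i ≤ k) ∧ (∀ i, 0 < μ i)
      ∧ f = catalanFn (Dplus ℓ) (fun i => (μ i : ℤ))}

def NNint (k ℓ : ℕ) (γ : Fin ℓ → ℤ) : ℤ :=
  (∑ i : Fin ℓ, (i : ℤ) * γ i)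
    - (∑ i : Fin ℓ, (i : ℤ)) * ((∑ i : Fin ℓ, γ i) - ((ℓ : ℤ) - 1) * k)

lemma NNint_nonneg {k ℓ : ℕ} {γ : Fin ℓ → ℤ} (hγ : ∀ i, γ i ≤ (k : ℤ)) :
    0 ≤ NNint k ℓ γ := by
  unfold NNint
  have hlow : ∀ j : Fin ℓ, (∑ i : Fin ℓ, γ i) - ((ℓ : ℤ) - 1) * k ≤ γ j := by
    intro j
    have h1 : ∑ i ∈ Finset.univ.erase j, γ i
        ≤ ((Finset.univ.erase j).card : ℤ) * k := by
      calc ∑ i ∈ Finset.univ.erase j, γ i ≤ ∑ _i ∈ Finset.univ.erase j, (k : ℤ) :=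
            Finset.sum_le_sum fun i _ => hγ i
        _ = ((Finset.univ.erase j).card : ℤ) * k := by rw [Finset.sum_const, nsmul_eq_mul]
    have h2 : ∑ i ∈ Finset.univ.erase j, γ i = (∑ i : Fin ℓ, γ i) - γ j :=
      Finset.sum_erase_eq_sub (Finset.mem_univ j)
    have h3 : ((Finset.univ.erase j).card : ℤ) = (ℓ : ℤ) - 1 := by
      rw [Finset.card_erase_of_mem (Finset.mem_univ j), Finset.card_univ, Fintype.card_fin]
      have := j.isLt
      push_cast
      omega
    rw [h2, h3] at h1
    linarith
  have hterm : ∀ j : Fin ℓ, (j : ℤ) * ((∑ i : Fin ℓ, γ i) - ((ℓ : ℤ) - 1) * k)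
      ≤ (j : ℤ) * γ j :=
    fun j => mul_le_mul_of_nonneg_left (hlow j) (Int.ofNat_nonneg _)
  have hkey : (∑ i : Fin ℓ, (i : ℤ)) * ((∑ a : Fin ℓ, γ a) - ((ℓ : ℤ) - 1) * k)
      ≤ ∑ i : Fin ℓ, (i : ℤ) * γ i := by
    rw [Finset.sum_mul]
    exact Finset.sum_le_sum fun i _ => hterm i
  linarith

lemma NNint_move {k ℓ : ℕ} {γ γ' : Fin ℓ → ℤ} {i₀ i₁ : Fin ℓ}
    (hadj : (i₀ : ℕ) + 1 = (i₁ : ℕ)) (hsame : ∀ a, a ≠ i₀ → a ≠ i₁ → γ' a = γ a)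
    (hsum2 : γ' i₀ + γ' i₁ = γ i₀ + γ i₁) (hlt : γ i₀ < γ' i₀) :
    NNint k ℓ γ' < NNint k ℓ γ := by
  have hne : i₀ ≠ i₁ := by
    intro h
    rw [h] at hadj
    omega
  have hdiff : ∀ (w : Fin ℓ → ℤ), (∑ i : Fin ℓ, w i * γ' i) - (∑ i : Fin ℓ, w i * γ i)
      = w i₀ * (γ' i₀ - γ i₀) + w i₁ * (γ' i₁ - γ i₁) := by
    intro w
    rw [← Finset.sum_sub_distrib]
    have h1 : ∀ i : Fin ℓ, w i * γ' i - w i * γ i = w i * (γ' i - γ i) := fun i => by ring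
    rw [Finset.sum_congr rfl fun i _ => h1 i]
    rw [← Finset.sum_subset (Finset.subset_univ ({i₀, i₁} : Finset (Fin ℓ)))
      (fun x _ hx => by
        simp only [Finset.mem_insert, Finset.mem_singleton] at hx
        push_neg at hx
        rw [hsame x hx.1 hx.2]
        ring)]
    rw [Finset.sum_pair hne]
  have hL := hdiff (fun i => (i : ℤ))
  have hS' : (∑ i : Fin ℓ, γ' i) - (∑ i : Fin ℓ, γ i) = 0 := by
    have := hdiff (fun _ => 1)
    simp only [one_mul] at this
    rw [this]
    linarith
  unfold NNint
  have hcast : ((i₀ : ℕ) : ℤ) + 1 = ((i₁ : ℕ) : ℤ) := by exact_mod_cast hadj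
  have hSS : (∑ i : Fin ℓ, γ' i) = ∑ i : Fin ℓ, γ i := by linarith
  rw [hSS]
  have hd1 : γ' i₁ - γ i₁ = -(γ' i₀ - γ i₀) := by linarith
  have hkey2 : ((i₀ : ℕ) : ℤ) * (γ' i₀ - γ i₀) + ((i₁ : ℕ) : ℤ) * (γ' i₁ - γ i₁)
      = -(γ' i₀ - γ i₀) := by
    rw [hd1, ← hcast]
    ring
  linarith

lemma tC_mul_mem {k : ℕ} {x : SymF} (hx : x ∈ LambdaK' k) : tC * x ∈ LambdaK' k := by
  have h : tC * x = (Polynomial.X : CR) • x := by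
    rw [MvPolynomial.smul_eq_C_mul]
    rfl
  rw [h]
  exact Submodule.smul_mem _ _ hx

lemma addE_val (i₀ i₁ : Fin ℓ) (γ : Fin ℓ → ℤ) (a : Fin ℓ) :
    addE (i₀, i₁) γ a = γ a + ((if i₀ = a then 1 else 0) - (if i₁ = a then 1 else 0)) := rfl

lemma stepD (k : ℕ) : ∀ ℓ (γ : Fin ℓ → ℤ), (∀ i, γ i ≤ (k : ℤ)) →
    catalanFn (Dplus ℓ) γ ∈ LambdaK' k := by
  intro ℓ
  induction ℓ with
  | zero =>
    intro γ hγ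
    apply Submodule.subset_span
    refine ⟨0, fun i => 1, ⟨fun i j _ => le_rfl, fun i => i.elim0⟩, fun i => i.elim0, ?_⟩
    congr 1
    funext i
    exact i.elim0
  | succ m IH =>
    have main : ∀ N : ℕ, ∀ γ : Fin (m + 1) → ℤ, (∀ i, γ i ≤ (k : ℤ)) →
        (NNint k (m + 1) γ).toNat ≤ N → catalanFn (Dplus (m + 1)) γ ∈ LambdaK' k := by
      intro N
      induction N using Nat.strong_induction_on with
      | _ N IHN =>
        intro γ hγ hN
        by_cases hasc : ∃ j : Fin m, γ (Fin.castSucc j) < γ (Fin.succ j)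
        · obtain ⟨j, hlt⟩ := hasc
          set i₀ := Fin.castSucc j with hi₀
          set i₁ := Fin.succ j with hi₁
          have hadj : (i₀ : ℕ) + 1 = (i₁ : ℕ) := by simp [hi₀, hi₁]
          have hne : i₀ ≠ i₁ := by
            intro h
            rw [h] at hadj
            omega
          have hne' : i₁ ≠ i₀ := fun h => hne h.symm
          have hstar := star hadj γ
          set γst := stv i₀ i₁ γ with hγst
          set γup := addE (i₀, i₁) γ with hγup
          set γupst := addE (i₀, i₁) γst with hγupst
          have hst0 : γst i₀ = γ i₁ - 1 := by
            show (if i₀ = i₀ then γ i₁ - 1 else _) = _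
            rw [if_pos rfl]
          have hst1 : γst i₁ = γ i₀ + 1 := by
            show (if i₁ = i₀ then _ else if i₁ = i₁ then γ i₀ + 1 else _) = _
            rw [if_neg hne', if_pos rfl]
          have hsto : ∀ a, a ≠ i₀ → a ≠ i₁ → γst a = γ a := by
            intro a ha0 ha1
            show (if a = i₀ then _ else if a = i₁ then _ else γ a) = _
            rw [if_neg ha0, if_neg ha1]
          have hup0 : γup i₀ = γ i₀ + 1 := by
            show γ i₀ + ((if i₀ = i₀ then 1 else 0) - (if i₁ = i₀ then 1 else 0)) = _
            rw [if_pos rfl, if_neg hne']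
            ring
          have hup1 : γup i₁ = γ i₁ - 1 := by
            show γ i₁ + ((if i₀ = i₁ then 1 else 0) - (if i₁ = i₁ then 1 else 0)) = _
            rw [if_neg hne, if_pos rfl]
            ring
          have hupo : ∀ a, a ≠ i₀ → a ≠ i₁ → γup a = γ a := by
            intro a ha0 ha1
            show γ a + ((if i₀ = a then 1 else 0) - (if i₁ = a then 1 else 0)) = _
            rw [if_neg (fun h => ha0 h.symm), if_neg (fun h => ha1 h.symm)]
            ring
          have hupst0 : γupst i₀ = γ i₁ := by
            show γst i₀ + ((if i₀ = i₀ then 1 else 0) - (if i₁ = i₀ then 1 else 0)) = _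
            rw [if_pos rfl, if_neg hne', hst0]
            ring
          have hupst1 : γupst i₁ = γ i₀ := by
            show γst i₁ + ((if i₀ = i₁ then 1 else 0) - (if i₁ = i₁ then 1 else 0)) = _
            rw [if_neg hne, if_pos rfl, hst1]
            ring
          have hupsto : ∀ a, a ≠ i₀ → a ≠ i₁ → γupst a = γ a := by
            intro a ha0 ha1
            show γst a + ((if i₀ = a then 1 else 0) - (if i₁ = a then 1 else 0)) = _
            rw [if_neg (fun h => ha0 h.symm), if_neg (fun h => ha1 h.symm), hsto a ha0 ha1]
            ring
          have hb_st : ∀ a, γst a ≤ (k : ℤ) := by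
            intro a
            by_cases e0 : a = i₀
            · rw [e0, hst0]
              have := hγ i₁
              omega
            · by_cases e1 : a = i₁
              · rw [e1, hst1]
                have := hγ i₁
                omega
              · rw [hsto a e0 e1]
                exact hγ a
          have hb_up : ∀ a, γup a ≤ (k : ℤ) := by
            intro a
            by_cases e0 : a = i₀
            · rw [e0, hup0]
              have := hγ i₁
              omega
            · by_cases e1 : a = i₁
              · rw [e1, hup1]
                have := hγ i₁
                omega
              · rw [hupo a e0 e1]
                exact hγ a
          have hb_upst : ∀ a, γupst a ≤ (k : ℤ) := by
            intro a
            by_cases e0 : a = i₀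
            · rw [e0, hupst0]
              exact hγ i₁
            · by_cases e1 : a = i₁
              · rw [e1, hupst1]
                exact hγ i₀
              · rw [hupsto a e0 e1]
                exact hγ a
          have applyIH : ∀ δ : Fin (m + 1) → ℤ, (∀ i, δ i ≤ (k : ℤ)) →
              NNint k (m + 1) δ < NNint k (m + 1) γ →
              catalanFn (Dplus (m + 1)) δ ∈ LambdaK' k := by
            intro δ hδ hm'
            have h0 := NNint_nonneg hδ
            have hγ0 := NNint_nonneg hγ
            exact IHN (NNint k (m + 1) δ).toNat (by omega) δ hδ le_rfl
          have hmove_up : NNint k (m + 1) γup < NNint k (m + 1) γ := by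
            apply NNint_move hadj hupo
            · rw [hup0, hup1]
              ring
            · rw [hup0]
              omega
          by_cases hb : γ i₁ = γ i₀ + 1
          · have hst_eq : γst = γ := by
              funext a
              by_cases e0 : a = i₀
              · rw [e0, hst0]
                omega
              · by_cases e1 : a = i₁
                · rw [e1, hst1]
                  omega
                · exact hsto a e0 e1
            have hupst_eq : γupst = γup := by
              rw [hγupst, hst_eq, hγup]
            rw [hst_eq, hupst_eq] at hstar
            have h2eq : (2 : SymF) * catalanFn (Dplus (m + 1)) γ
                = 2 * (tC * catalanFn (Dplus (m + 1)) γup) := by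
              linear_combination hstar
            have h20 : (2 : SymF) ≠ 0 := two_ne_zero
            have hcancel := mul_left_cancel₀ h20 h2eq
            rw [hcancel]
            exact tC_mul_mem (applyIH γup hb_up hmove_up)
          · have hb2 : γ i₀ + 2 ≤ γ i₁ := by omega
            have heq : catalanFn (Dplus (m + 1)) γ
                = tC * catalanFn (Dplus (m + 1)) γup + tC * catalanFn (Dplus (m + 1)) γupst
                  - catalanFn (Dplus (m + 1)) γst := by
              linear_combination hstar
            rw [heq]
            have hmove_st : NNint k (m + 1) γst < NNint k (m + 1) γ := by
              apply NNint_move hadj hsto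
              · rw [hst0, hst1]
                ring
              · rw [hst0]
                omega
            have hmove_upst : NNint k (m + 1) γupst < NNint k (m + 1) γ := by
              apply NNint_move hadj hupsto
              · rw [hupst0, hupst1]
                ring
              · rw [hupst0]
                omega
            exact Submodule.sub_mem _
              (Submodule.add_mem _ (tC_mul_mem (applyIH γup hb_up hmove_up))
                (tC_mul_mem (applyIH γupst hb_upst hmove_upst)))
              (applyIH γst hb_st hmove_st)
        · push_neg at hasc
          have hanti : Antitone γ := Fin.antitone_iff_succ_le.2 fun j => hasc j
          rcases lt_trichotomy (γ (Fin.last m)) 0 with hneg | hzero | hpos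
          · rw [catalan_last_neg hneg]
            exact Submodule.zero_mem _
          · rw [catalan_strip γ hzero]
            exact IH (γ ∘ Fin.castSucc) fun i => hγ _
          · apply Submodule.subset_span
            have hposall : ∀ i, 0 < γ i := fun i =>
              lt_of_lt_of_le hpos (hanti (Fin.le_last i))
            refine ⟨m + 1, fun i => (γ i).toNat, ⟨fun i j hij => ?_, fun i => ?_⟩,
              fun i => ?_, ?_⟩
            · show (γ j).toNat ≤ (γ i).toNat
              have := hanti hij
              have := hposall i
              have := hposall j
              omega
            · show (γ i).toNat ≤ k
              have := hγ i
              have := hposall i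
              omega
            · show 0 < (γ i).toNat
              have := hposall i
              omega
            · congr 1
              funext i
              exact (Int.toNat_of_nonneg (le_of_lt (hposall i))).symm
    intro γ hγ
    exact main (NNint k (m + 1) γ).toNat γ hγ le_rfl

end CatAux

lemma LambdaK'_eq (k : ℕ) : CatAux.LambdaK' k = LambdaK k := rfl

lemma nr_insert {ℓ : ℕ} {Ψ : Finset (Fin ℓ × Fin ℓ)} {α : Fin ℓ × Fin ℓ}
    (hα : α ∈ Dplus ℓ) (hαΨ : α ∉ Ψ) (i : Fin ℓ) :
    (nrN (insert α Ψ) (i : ℕ) : ℤ)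
      = (nrN Ψ (i : ℕ) : ℤ) - (if (α.1 : ℕ) = (i : ℕ) then 1 else 0) := by
  unfold nrN
  have hsd : Dplus ℓ \ insert α Ψ = (Dplus ℓ \ Ψ).erase α := by
    ext p
    simp only [Finset.mem_sdiff, Finset.mem_insert, Finset.mem_erase]
    tauto
  rw [hsd, Finset.filter_erase]
  by_cases hi : (α.1 : ℕ) = (i : ℕ)
  · rw [if_pos hi]
    have hmem : α ∈ (Dplus ℓ \ Ψ).filter fun p => (p.1 : ℕ) = (i : ℕ) := by
      rw [Finset.mem_filter, Finset.mem_sdiff]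
      exact ⟨⟨hα, hαΨ⟩, hi⟩
    rw [Finset.card_erase_of_mem hmem]
    have hpos : 0 < ((Dplus ℓ \ Ψ).filter fun p => (p.1 : ℕ) = (i : ℕ)).card :=
      Finset.card_pos.2 ⟨α, hmem⟩
    push_cast
    omega
  · rw [if_neg hi]
    rw [Finset.erase_eq_of_notMem (by
      rw [Finset.mem_filter]
      exact fun h => hi h.2)]
    push_cast
    ring

lemma exists_addable {ℓ : ℕ} {Ψ : Finset (Fin ℓ × Fin ℓ)} (hΨ : IsRootIdeal Ψ)
    (hne : Ψ ≠ Dplus ℓ) :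
    ∃ α, α ∈ Dplus ℓ ∧ α ∉ Ψ ∧ IsRootIdeal (insert α Ψ) := by
  have hssub : (Dplus ℓ \ Ψ).Nonempty := by
    rw [Finset.sdiff_nonempty]
    intro hsub
    exact hne (Finset.Subset.antisymm hΨ.1 hsub)
  obtain ⟨α, hαmem, hαmax⟩ :=
    Finset.exists_max_image (Dplus ℓ \ Ψ) (fun p => (p.2 : ℕ) - (p.1 : ℕ)) hssub
  rw [Finset.mem_sdiff] at hαmem
  refine ⟨α, hαmem.1, hαmem.2, ?_, ?_⟩
  · intro p hp
    rcases Finset.mem_insert.1 hp with rfl | hp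
    · exact hαmem.1
    · exact hΨ.1 hp
  · intro p hp q hq hq1 hq2
    rcases Finset.mem_insert.1 hp with rfl | hpΨ
    · by_cases hqΨ : q ∈ Ψ
      · exact Finset.mem_insert_of_mem hqΨ
      · have hqmem : q ∈ Dplus ℓ \ Ψ := Finset.mem_sdiff.2 ⟨hq, hqΨ⟩
        have hle := hαmax q hqmem
        have h1 : (q.1 : ℕ) ≤ (p.1 : ℕ) := hq1
        have h2 : (p.2 : ℕ) ≤ (q.2 : ℕ) := hq2
        have h3 : (p.1 : ℕ) < (p.2 : ℕ) := CatAux.mem_Dplus_iff.1 hαmem.1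
        have h4 : (q.1 : ℕ) < (q.2 : ℕ) := CatAux.mem_Dplus_iff.1 hq
        have hq' : q = p := by
          have hv1 : (q.1 : ℕ) = (p.1 : ℕ) := by omega
          have hv2 : (q.2 : ℕ) = (p.2 : ℕ) := by omega
          exact Prod.ext (Fin.ext hv1) (Fin.ext hv2)
        rw [hq']
        exact Finset.mem_insert_self _ _
    · exact Finset.mem_insert_of_mem (hΨ.2 p hpΨ q hq hq1 hq2)


/-- Let `k ≥ 1` and let `(Ψ, μ)` be an indexed root ideal of
length `ℓ` such that `style(Ψ,μ)_i ≤ k` for all `i ∈ [ℓ]`.  Then the Catalan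
function `H(Ψ;μ)` lies in `Λᵏ = Span_{ℤ[t]}{H_ν(x;t) : ν ∈ Par^k}`. -/
theorem catalanFn_mem_LambdaK (k : ℕ) (hk : 1 ≤ k) {ℓ : ℕ}
    (Ψ : Finset (Fin ℓ × Fin ℓ)) (hΨ : IsRootIdeal Ψ) (μ : Fin ℓ → ℤ)
    (hstyle : ∀ i, i < ℓ → styleZN Ψ μ i ≤ (k : ℤ)) :
    catalanFn Ψ μ ∈ LambdaK k := by
  rw [← LambdaK'_eq]
  have key : ∀ c : ℕ, ∀ Φ : Finset (Fin ℓ × Fin ℓ), IsRootIdeal Φ →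
      ∀ γ : Fin ℓ → ℤ, (∀ i : Fin ℓ, (nrN Φ (i : ℕ) : ℤ) + γ i ≤ (k : ℤ)) →
      (Dplus ℓ \ Φ).card ≤ c → catalanFn Φ γ ∈ CatAux.LambdaK' k := by
    intro c
    induction c with
    | zero =>
      intro Φ hΦ γ hsty hcard
      have heq : Φ = Dplus ℓ := by
        apply Finset.Subset.antisymm hΦ.1
        intro p hp
        by_contra hpΦ
        have : p ∈ Dplus ℓ \ Φ := Finset.mem_sdiff.2 ⟨hp, hpΦ⟩
        have := Finset.card_pos.2 ⟨p, this⟩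
        omega
      subst heq
      apply CatAux.stepD
      intro i
      have h1 := hsty i
      have hnr0 : nrN (Dplus ℓ) (i : ℕ) = 0 := by
        unfold nrN
        rw [Finset.sdiff_self, Finset.filter_empty, Finset.card_empty]
      rw [hnr0] at h1
      simpa using h1
    | succ c IH =>
      intro Φ hΦ γ hsty hcard
      by_cases heq : Φ = Dplus ℓ
      · subst heq
        apply CatAux.stepD
        intro i
        have h1 := hsty i
        have hnr0 : nrN (Dplus ℓ) (i : ℕ) = 0 := by
          unfold nrN
          rw [Finset.sdiff_self, Finset.filter_empty, Finset.card_empty]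
        rw [hnr0] at h1
        simpa using h1
      · obtain ⟨α, hαD, hαΦ, hins⟩ := exists_addable hΦ heq
        have hrec := CatAux.catalan_insert hins.1 hαΦ γ
        have hsplit : catalanFn Φ γ = catalanFn (insert α Φ) γ
            - tC * catalanFn (insert α Φ) (CatAux.addE α γ) := by
          linear_combination -hrec
        have hcard' : (Dplus ℓ \ insert α Φ).card ≤ c := by
          have hsd : Dplus ℓ \ insert α Φ = (Dplus ℓ \ Φ).erase α := by
            ext p
            simp only [Finset.mem_sdiff, Finset.mem_insert, Finset.mem_erase]
            tauto
          have hmem : α ∈ Dplus ℓ \ Φ := Finset.mem_sdiff.2 ⟨hαD, hαΦ⟩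
          have hpos : 0 < (Dplus ℓ \ Φ).card := Finset.card_pos.2 ⟨α, hmem⟩
          rw [hsd, Finset.card_erase_of_mem hmem]
          omega
        rw [hsplit]
        apply Submodule.sub_mem
        · apply IH (insert α Φ) hins γ ?_ hcard'
          intro i
          have h1 := hsty i
          have h2 := nr_insert hαD hαΦ i
          rw [h2]
          split_ifs <;> omega
        · apply CatAux.tC_mul_mem
          apply IH (insert α Φ) hins (CatAux.addE α γ) ?_ hcard'
          intro i
          have h1 := hsty i
          have h2 := nr_insert hαD hαΦ i
          have h3 : CatAux.addE α γ i
              = γ i + ((if α.1 = i then 1 else 0) - (if α.2 = i then 1 else 0)) := rfl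
          rw [h2, h3]
          have hv1 : ((α.1 : ℕ) = (i : ℕ)) ↔ α.1 = i := Fin.val_inj
          by_cases c1 : α.1 = i
          · rw [if_pos (hv1.2 c1), if_pos c1]
            split_ifs <;> omega
          · rw [if_neg (fun h => c1 (hv1.1 h)), if_neg c1]
            split_ifs <;> omega
  apply key (Dplus ℓ \ Ψ).card Ψ hΨ μ ?_ le_rfl
  intro i
  have h1 := hstyle (i : ℕ) i.isLt
  unfold styleZN extendFinZ at h1
  rw [dif_pos i.isLt] at h1
  simpa using h1

end
end

section
/- Catalan operators obey the composition law: for any indexed root ideals (Ψ,μ) of length r and (Φ,ν) of length ℓ−r, the composition of operators satisfies H^Ψ_μ ∘ H^Φ_ν = H^{Ψ⊎Φ}_{μν} in End_{ℤ[t]}(Λ). -/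
open scoped BigOperators Classical

noncomputable section

section Operators

/-- The generating series `∑_j (h_j^⊥ f) u^j` of the skewing operators `h_j^⊥`
(the adjoints of multiplication by `h_j` for the Hall inner product), as the
`ℤ[t]`-algebra map determined by `h_n ↦ ∑_{j=0}^{n} h_{n-j} u^j`. -/
def hPerpSeries : SymF →ₐ[CR] Polynomial SymF :=
  MvPolynomial.aeval fun n : ℕ =>
    ∑ j ∈ Finset.range (n + 2), Polynomial.C (hh ((n : ℤ) + 1 - j)) * Polynomial.X ^ j

/-- The skewing operator `h_j^⊥`. -/
def hPerp (j : ℕ) (f : SymF) : SymF := (hPerpSeries f).coeff j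

/-- The generating series `∑_i (e_i^⊥ f) u^i` of the skewing operators `e_i^⊥`
(the adjoints of multiplication by the elementary symmetric functions `e_i`),
as the `ℤ[t]`-algebra map determined by `h_n ↦ h_n + h_{n-1} u`. -/
def ePerpSeries : SymF →ₐ[CR] Polynomial SymF :=
  MvPolynomial.aeval fun n : ℕ =>
    Polynomial.C (hh ((n : ℤ) + 1)) + Polynomial.C (hh (n : ℤ)) * Polynomial.X

/-- The skewing operator `e_i^⊥`. -/
def ePerp (i : ℕ) (f : SymF) : SymF := (ePerpSeries f).coeff i

/-- The Garsia–Jing vertex operator `B_m = ∑_{i,j ≥ 0} (-1)^i t^j h_{m+i+j} e_i^⊥ h_j^⊥`. -/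
def GJ (m : ℤ) (f : SymF) : SymF :=
  ∑ᶠ (i : ℕ) (j : ℕ), (-1 : SymF) ^ i * tC ^ j * hh (m + i + j) * ePerp i (hPerp j f)

/-- `B̃_γ = B_{γ_1} B_{γ_2} ⋯ B_{γ_ℓ}` (composition of Garsia–Jing operators). -/
def GJt {ℓ : ℕ} (γ : Fin ℓ → ℤ) (f : SymF) : SymF := (List.ofFn γ).foldr GJ f

/-- The Catalan operator `H^Ψ_γ = ∏_{(i,j) ∈ Δ⁺_ℓ \ Ψ} (1 - t 𝐑_{ij}) B̃_γ`,
expanded as a finite signed sum over subsets of `Δ⁺_ℓ \ Ψ`. -/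
def catalanOp {ℓ : ℕ} (Ψ : Finset (Fin ℓ × Fin ℓ)) (γ : Fin ℓ → ℤ) (f : SymF) : SymF :=
  ∑ S ∈ (Dplus ℓ \ Ψ).powerset, (-1 : SymF) ^ S.card * tC ^ S.card *
    GJt (fun a => γ a + ∑ p ∈ S,
      ((if p.1 = a then 1 else 0) - (if p.2 = a then (1 : ℤ) else 0))) f

/-- The generalized Hall–Littlewood vertex operator
`B_γ = ∏_{(i,j) ∈ Δ⁺_ℓ} (1 - t 𝐑_{ij}) B̃_γ = H^∅_γ`. -/
def vertexB {ℓ : ℕ} (γ : Fin ℓ → ℤ) : SymF → SymF :=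
  catalanOp (∅ : Finset (Fin ℓ × Fin ℓ)) γ

/-- The root ideal `Ψ ⊎ Φ ⊆ Δ⁺_{r+m}`, determined by
`Δ⁺_{r+m} \ (Ψ ⊎ Φ) = (Δ⁺_r \ Ψ) ⊔ {(i+r, j+r) : (i,j) ∈ Δ⁺_m \ Φ}`. -/
def uplus {r m : ℕ} (Ψ : Finset (Fin r × Fin r)) (Φ : Finset (Fin m × Fin m)) :
    Finset (Fin (r + m) × Fin (r + m)) :=
  (Dplus (r + m)).filter fun p =>
    ¬((∃ q : Fin r × Fin r, q ∉ Ψ ∧ q.1 < q.2 ∧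
          (p.1 : ℕ) = (q.1 : ℕ) ∧ (p.2 : ℕ) = (q.2 : ℕ)) ∨
      (∃ q : Fin m × Fin m, q ∉ Φ ∧ q.1 < q.2 ∧
          (p.1 : ℕ) = (q.1 : ℕ) + r ∧ (p.2 : ℕ) = (q.2 : ℕ) + r))

/-- `Λ_ℤ = ℤ[h₁,h₂,…] = Λ/(t-1)`. -/
abbrev SymFZ : Type := MvPolynomial ℕ ℤ

/-- The specialization `t = 1`, i.e. the canonical projection `Λ → Λ/(t-1) = Λ_ℤ`. -/
def specT1 : SymF →+* SymFZ := MvPolynomial.map (Polynomial.evalRingHom 1)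

end Operators

section AuxProof

open Finset

lemma hPerp_add' (j : ℕ) (f g : SymF) : hPerp j (f + g) = hPerp j f + hPerp j g := by
  simp [hPerp, map_add]

lemma ePerp_add' (i : ℕ) (f g : SymF) : ePerp i (f + g) = ePerp i f + ePerp i g := by
  simp [ePerp, map_add]

lemma ePerp_zero' (i : ℕ) : ePerp i 0 = 0 := by simp [ePerp]

lemma hPerpSeries_C_mul (a : CR) (f : SymF) :
    hPerpSeries (MvPolynomial.C a * f) = Polynomial.C (MvPolynomial.C a) * hPerpSeries f := by
  rw [map_mul]
  congr 1
  rw [show (MvPolynomial.C a : SymF) = algebraMap CR SymF a from rfl, AlgHom.commutes]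
  simp [Polynomial.algebraMap_apply]

lemma ePerpSeries_C_mul (a : CR) (f : SymF) :
    ePerpSeries (MvPolynomial.C a * f) = Polynomial.C (MvPolynomial.C a) * ePerpSeries f := by
  rw [map_mul]
  congr 1
  rw [show (MvPolynomial.C a : SymF) = algebraMap CR SymF a from rfl, AlgHom.commutes]
  simp [Polynomial.algebraMap_apply]

lemma hPerp_C_mul (a : CR) (j : ℕ) (f : SymF) :
    hPerp j (MvPolynomial.C a * f) = MvPolynomial.C a * hPerp j f := by
  rw [hPerp, hPerpSeries_C_mul, Polynomial.coeff_C_mul, hPerp]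

lemma ePerp_C_mul (a : CR) (i : ℕ) (f : SymF) :
    ePerp i (MvPolynomial.C a * f) = MvPolynomial.C a * ePerp i f := by
  rw [ePerp, ePerpSeries_C_mul, Polynomial.coeff_C_mul, ePerp]

lemma hPerp_eq_zero' {f : SymF} {j : ℕ} (h : (hPerpSeries f).natDegree < j) : hPerp j f = 0 :=
  Polynomial.coeff_eq_zero_of_natDegree_lt h

lemma ePerp_eq_zero' {f : SymF} {i : ℕ} (h : (ePerpSeries f).natDegree < i) : ePerp i f = 0 :=
  Polynomial.coeff_eq_zero_of_natDegree_lt h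

lemma GJ_eq_sum (m : ℤ) (f : SymF) (D N : ℕ)
    (hD : (hPerpSeries f).natDegree ≤ D)
    (hN : ∀ j ≤ D, (ePerpSeries (hPerp j f)).natDegree ≤ N) :
    GJ m f = ∑ i ∈ Finset.range (N + 1), ∑ j ∈ Finset.range (D + 1),
      (-1 : SymF) ^ i * tC ^ j * hh (m + i + j) * ePerp i (hPerp j f) := by
  have hinner : ∀ i : ℕ, ∑ᶠ j : ℕ, (-1 : SymF) ^ i * tC ^ j * hh (m + i + j) * ePerp i (hPerp j f)
      = ∑ j ∈ Finset.range (D + 1), (-1 : SymF) ^ i * tC ^ j * hh (m + i + j) * ePerp i (hPerp j f) := by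
    intro i
    apply finsum_eq_finset_sum_of_support_subset
    intro j hj
    by_contra hmem
    simp only [Finset.coe_range, Set.mem_Iio, not_lt] at hmem
    have : hPerp j f = 0 := hPerp_eq_zero' (lt_of_le_of_lt hD (by omega))
    exact hj (by simp [this, ePerp_zero'])
  unfold GJ
  rw [finsum_congr hinner]
  apply finsum_eq_finset_sum_of_support_subset
  intro i hi
  by_contra hmem
  simp only [Finset.coe_range, Set.mem_Iio, not_lt] at hmem
  apply hi
  apply Finset.sum_eq_zero
  intro j hj
  have : ePerp i (hPerp j f) = 0 :=
    ePerp_eq_zero' (lt_of_le_of_lt (hN j (Nat.lt_succ_iff.mp (Finset.mem_range.mp hj))) (by omega))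
  simp [this]

lemma GJ_add (m : ℤ) (f g : SymF) : GJ m (f + g) = GJ m f + GJ m g := by
  set D := max (hPerpSeries f).natDegree (hPerpSeries g).natDegree with hDdef
  set N := max ((Finset.range (D+1)).sup fun j => (ePerpSeries (hPerp j f)).natDegree)
            ((Finset.range (D+1)).sup fun j => (ePerpSeries (hPerp j g)).natDegree) with hNdef
  have hNf : ∀ j ≤ D, (ePerpSeries (hPerp j f)).natDegree ≤ N := fun j hj =>
    le_trans (Finset.le_sup (f := fun j => (ePerpSeries (hPerp j f)).natDegree)
      (Finset.mem_range.mpr (by omega))) (le_max_left _ _)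
  have hNg : ∀ j ≤ D, (ePerpSeries (hPerp j g)).natDegree ≤ N := fun j hj =>
    le_trans (Finset.le_sup (f := fun j => (ePerpSeries (hPerp j g)).natDegree)
      (Finset.mem_range.mpr (by omega))) (le_max_right _ _)
  have hDfg : (hPerpSeries (f + g)).natDegree ≤ D := by
    rw [map_add]; exact le_trans (Polynomial.natDegree_add_le _ _) (by simp [hDdef])
  have hNfg : ∀ j ≤ D, (ePerpSeries (hPerp j (f + g))).natDegree ≤ N := by
    intro j hj
    rw [hPerp_add', map_add]
    exact le_trans (Polynomial.natDegree_add_le _ _) (max_le (hNf j hj) (hNg j hj))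
  rw [GJ_eq_sum m f D N (le_max_left _ _) hNf, GJ_eq_sum m g D N (le_max_right _ _) hNg,
    GJ_eq_sum m (f + g) D N hDfg hNfg, ← Finset.sum_add_distrib]
  refine Finset.sum_congr rfl fun i _ => ?_
  rw [← Finset.sum_add_distrib]
  refine Finset.sum_congr rfl fun j _ => ?_
  rw [hPerp_add', ePerp_add']; ring

lemma GJ_C_mul (m : ℤ) (a : CR) (f : SymF) :
    GJ m (MvPolynomial.C a * f) = MvPolynomial.C a * GJ m f := by
  set D := (hPerpSeries f).natDegree with hDdef
  set N := (Finset.range (D+1)).sup (fun j => (ePerpSeries (hPerp j f)).natDegree) with hNdef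
  have hNf : ∀ j ≤ D, (ePerpSeries (hPerp j f)).natDegree ≤ N := fun j hj =>
    Finset.le_sup (f := fun j => (ePerpSeries (hPerp j f)).natDegree)
      (Finset.mem_range.mpr (by omega))
  have hDaf : (hPerpSeries (MvPolynomial.C a * f)).natDegree ≤ D := by
    rw [hPerpSeries_C_mul]
    exact Polynomial.natDegree_C_mul_le _ _
  have hNaf : ∀ j ≤ D, (ePerpSeries (hPerp j (MvPolynomial.C a * f))).natDegree ≤ N := by
    intro j hj
    rw [hPerp_C_mul, ePerpSeries_C_mul]
    exact le_trans (Polynomial.natDegree_C_mul_le _ _) (hNf j hj)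
  rw [GJ_eq_sum m f D N le_rfl hNf, GJ_eq_sum m (MvPolynomial.C a * f) D N hDaf hNaf,
    Finset.mul_sum]
  refine Finset.sum_congr rfl fun i _ => ?_
  rw [Finset.mul_sum]
  refine Finset.sum_congr rfl fun j _ => ?_
  rw [hPerp_C_mul, ePerp_C_mul]
  ring

lemma GJ_zero (m : ℤ) : GJ m 0 = 0 := by
  have := GJ_C_mul m 0 0
  simpa using this

lemma foldr_GJ_add (l : List ℤ) (f g : SymF) :
    l.foldr GJ (f + g) = l.foldr GJ f + l.foldr GJ g := by
  induction l with
  | nil => rfl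
  | cons a l ih => simp only [List.foldr_cons, ih, GJ_add]

lemma foldr_GJ_C_mul (l : List ℤ) (a : CR) (f : SymF) :
    l.foldr GJ (MvPolynomial.C a * f) = MvPolynomial.C a * l.foldr GJ f := by
  induction l with
  | nil => rfl
  | cons b l ih => simp only [List.foldr_cons, ih, GJ_C_mul]

lemma foldr_GJ_zero (l : List ℤ) : l.foldr GJ 0 = 0 := by
  induction l with
  | nil => rfl
  | cons a l ih => simp only [List.foldr_cons, ih, GJ_zero]

lemma GJt_add {ℓ : ℕ} (γ : Fin ℓ → ℤ) (f g : SymF) :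
    GJt γ (f + g) = GJt γ f + GJt γ g := foldr_GJ_add _ f g

lemma GJt_C_mul {ℓ : ℕ} (γ : Fin ℓ → ℤ) (a : CR) (f : SymF) :
    GJt γ (MvPolynomial.C a * f) = MvPolynomial.C a * GJt γ f := foldr_GJ_C_mul _ a f

lemma GJt_zero {ℓ : ℕ} (γ : Fin ℓ → ℤ) : GJt γ 0 = 0 := foldr_GJ_zero _

lemma GJt_sum {ℓ : ℕ} (γ : Fin ℓ → ℤ) {ι : Type} (s : Finset ι) (g : ι → SymF) :
    GJt γ (∑ i ∈ s, g i) = ∑ i ∈ s, GJt γ (g i) := by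
  classical
  induction s using Finset.induction_on with
  | empty => simpa using GJt_zero γ
  | insert a s hx ih => rw [Finset.sum_insert hx, Finset.sum_insert hx, GJt_add, ih]

lemma GJt_append {r m : ℕ} (α : Fin r → ℤ) (β : Fin m → ℤ) (f : SymF) :
    GJt (Fin.append α β) f = GJt α (GJt β f) := by
  unfold GJt
  rw [List.ofFn_add, List.foldr_append,
    show (List.ofFn fun i => Fin.append α β (Fin.castLE (Nat.le_add_right r m) i)) = List.ofFn α from
      congrArg List.ofFn (funext fun i => Fin.append_left α β i),
    show (List.ofFn fun j => Fin.append α β (Fin.natAdd r j)) = List.ofFn β from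
      congrArg List.ofFn (funext fun j => Fin.append_right α β j)]

lemma neg_one_tC_pow (k : ℕ) :
    (-1 : SymF) ^ k * tC ^ k = MvPolynomial.C ((-Polynomial.X) ^ k : CR) := by
  rw [map_pow, map_neg, show MvPolynomial.C Polynomial.X = tC from rfl,
    show -tC = (-1 : SymF) * tC from (neg_one_mul tC).symm, mul_pow]

/-- `shiftTup γ S` is the raising-operator shift of the tuple `γ` along `S`. -/
def shiftTup {ℓ : ℕ} (γ : Fin ℓ → ℤ) (S : Finset (Fin ℓ × Fin ℓ)) : Fin ℓ → ℤ :=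
  fun a => γ a + ∑ p ∈ S, ((if p.1 = a then 1 else 0) - (if p.2 = a then (1 : ℤ) else 0))

lemma catalanOp_eq {ℓ : ℕ} (Ψ : Finset (Fin ℓ × Fin ℓ)) (γ : Fin ℓ → ℤ) (f : SymF) :
    catalanOp Ψ γ f = ∑ S ∈ (Dplus ℓ \ Ψ).powerset,
      MvPolynomial.C ((-Polynomial.X) ^ S.card : CR) * GJt (shiftTup γ S) f := by
  unfold catalanOp
  refine Finset.sum_congr rfl fun S _ => ?_
  rw [neg_one_tC_pow]
  rfl

lemma embA_inj (r m : ℕ) :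
    Function.Injective (fun q : Fin r × Fin r => (Fin.castAdd m q.1, Fin.castAdd m q.2)) := by
    intro q q' h
    have h1 := congrArg Prod.fst h
    have h2 := congrArg Prod.snd h
    simp only at h1 h2
    exact Prod.ext (Fin.castAdd_injective _ _ h1) (Fin.castAdd_injective _ _ h2)

/-- Embedding of pairs via `Fin.castAdd`. -/
def embA (r m : ℕ) : Fin r × Fin r ↪ Fin (r + m) × Fin (r + m) :=
  ⟨fun q => (Fin.castAdd m q.1, Fin.castAdd m q.2), embA_inj r m⟩

lemma embB_inj (r m : ℕ) :
    Function.Injective (fun q : Fin m × Fin m => (Fin.natAdd r q.1, Fin.natAdd r q.2)) := by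
    intro q q' h
    have h1 := congrArg Prod.fst h
    have h2 := congrArg Prod.snd h
    simp only at h1 h2
    refine Prod.ext (Fin.ext ?_) (Fin.ext ?_)
    · have := congrArg Fin.val h1; simp only [Fin.coe_natAdd] at this; omega
    · have := congrArg Fin.val h2; simp only [Fin.coe_natAdd] at this; omega

/-- Embedding of pairs via `Fin.natAdd`. -/
def embB (r m : ℕ) : Fin m × Fin m ↪ Fin (r + m) × Fin (r + m) :=
  ⟨fun q => (Fin.natAdd r q.1, Fin.natAdd r q.2), embB_inj r m⟩

lemma mem_Dplus {ℓ : ℕ} (p : Fin ℓ × Fin ℓ) : p ∈ Dplus ℓ ↔ p.1 < p.2 := by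
  simp [Dplus]

lemma disj_maps {r m : ℕ} (S : Finset (Fin r × Fin r)) (T : Finset (Fin m × Fin m)) :
    Disjoint (S.map (embA r m)) (T.map (embB r m)) := by
  rw [Finset.disjoint_left]
  intro p hpS hpT
  rw [Finset.mem_map] at hpS hpT
  obtain ⟨q, _, hq⟩ := hpS
  obtain ⟨q', _, hq'⟩ := hpT
  have h1 : (Fin.castAdd m q.1 : Fin (r + m)) = p.1 := congrArg Prod.fst hq
  have h2 : (Fin.natAdd r q'.1 : Fin (r + m)) = p.1 := congrArg Prod.fst hq'
  have hval : (q.1 : ℕ) = r + (q'.1 : ℕ) := by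
    rw [← Fin.coe_castAdd m q.1, h1, ← h2, Fin.coe_natAdd]
  have := q.1.isLt
  omega

lemma compl_uplus {r m : ℕ} (Ψ : Finset (Fin r × Fin r)) (Φ : Finset (Fin m × Fin m)) :
    Dplus (r + m) \ uplus Ψ Φ = ((Dplus r \ Ψ).map (embA r m)) ∪ ((Dplus m \ Φ).map (embB r m)) := by
  ext p
  simp only [Finset.mem_sdiff, Finset.mem_union, Finset.mem_map, mem_Dplus, uplus,
    Finset.mem_filter, not_and, not_not, embA, embB, Function.Embedding.coeFn_mk]
  constructor
  · rintro ⟨hlt, hcond⟩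
    rcases hcond hlt with ⟨q, hqΨ, hq12, h1, h2⟩ | ⟨q, hqΦ, hq12, h1, h2⟩
    · left
      refine ⟨q, ⟨hq12, hqΨ⟩, ?_⟩
      refine Prod.ext (Fin.ext ?_) (Fin.ext ?_) <;> simp [Fin.coe_castAdd, h1, h2]
    · right
      refine ⟨q, ⟨hq12, hqΦ⟩, ?_⟩
      refine Prod.ext (Fin.ext ?_) (Fin.ext ?_) <;> simp [Fin.coe_natAdd, h1, h2, Nat.add_comm]
  · rintro (⟨q, ⟨hq12, hqΨ⟩, rfl⟩ | ⟨q, ⟨hq12, hqΦ⟩, rfl⟩)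
    · have hlt : (Fin.castAdd m q.1 : Fin (r + m)) < Fin.castAdd m q.2 := by
        rw [Fin.lt_def] at hq12 ⊢; simpa using hq12
      refine ⟨hlt, fun _ => Or.inl ⟨q, hqΨ, hq12, by simp, by simp⟩⟩
    · have hlt : (Fin.natAdd r q.1 : Fin (r + m)) < Fin.natAdd r q.2 := by
        rw [Fin.lt_def] at hq12 ⊢; simp [Fin.coe_natAdd]; omega
      refine ⟨hlt, fun _ => Or.inr ⟨q, hqΦ, hq12, by simp [Nat.add_comm], by simp [Nat.add_comm]⟩⟩

lemma shift_append {r m : ℕ} (μ : Fin r → ℤ) (ν : Fin m → ℤ)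
    (S : Finset (Fin r × Fin r)) (T : Finset (Fin m × Fin m)) :
    shiftTup (Fin.append μ ν) (S.map (embA r m) ∪ T.map (embB r m))
      = Fin.append (shiftTup μ S) (shiftTup ν T) := by
  funext a
  unfold shiftTup
  refine Fin.addCases (fun b => ?_) (fun b => ?_) a
  · rw [Fin.append_left, Fin.append_left, Finset.sum_union (disj_maps S T),
      Finset.sum_map, Finset.sum_map]
    have hT : ∑ q ∈ T, ((if ((embB r m) q).1 = Fin.castAdd m b then 1 else 0)
        - (if ((embB r m) q).2 = Fin.castAdd m b then (1 : ℤ) else 0)) = 0 := by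
      refine Finset.sum_eq_zero fun q _ => ?_
      have e1 : ¬((embB r m q).1 = Fin.castAdd m b) := by
        simp only [embB, Function.Embedding.coeFn_mk, Fin.ext_iff, Fin.coe_natAdd,
          Fin.coe_castAdd]
        have := b.isLt; omega
      have e2 : ¬((embB r m q).2 = Fin.castAdd m b) := by
        simp only [embB, Function.Embedding.coeFn_mk, Fin.ext_iff, Fin.coe_natAdd,
          Fin.coe_castAdd]
        have := b.isLt; omega
      simp [e1, e2]
    rw [hT, add_zero]
    congr 1
    refine Finset.sum_congr rfl fun q _ => ?_
    have e1 : ((embA r m q).1 = Fin.castAdd m b) ↔ q.1 = b := by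
      simp [embA, Fin.ext_iff]
    have e2 : ((embA r m q).2 = Fin.castAdd m b) ↔ q.2 = b := by
      simp [embA, Fin.ext_iff]
    rw [if_congr e1 rfl rfl, if_congr e2 rfl rfl]
  · rw [Fin.append_right, Fin.append_right, Finset.sum_union (disj_maps S T),
      Finset.sum_map, Finset.sum_map]
    have hS : ∑ q ∈ S, ((if ((embA r m) q).1 = Fin.natAdd r b then 1 else 0)
        - (if ((embA r m) q).2 = Fin.natAdd r b then (1 : ℤ) else 0)) = 0 := by
      refine Finset.sum_eq_zero fun q _ => ?_
      have e1 : ¬((embA r m q).1 = Fin.natAdd r b) := by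
        simp only [embA, Function.Embedding.coeFn_mk, Fin.ext_iff, Fin.coe_natAdd,
          Fin.coe_castAdd]
        have := q.1.isLt; omega
      have e2 : ¬((embA r m q).2 = Fin.natAdd r b) := by
        simp only [embA, Function.Embedding.coeFn_mk, Fin.ext_iff, Fin.coe_natAdd,
          Fin.coe_castAdd]
        have := q.2.isLt; omega
      simp [e1, e2]
    rw [hS, zero_add]
    congr 1
    refine Finset.sum_congr rfl fun q _ => ?_
    have e1 : ((embB r m q).1 = Fin.natAdd r b) ↔ q.1 = b := by
      simp [embB, Fin.ext_iff]
    have e2 : ((embB r m q).2 = Fin.natAdd r b) ↔ q.2 = b := by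
      simp [embB, Fin.ext_iff]
    rw [if_congr e1 rfl rfl, if_congr e2 rfl rfl]

lemma card_union_maps {r m : ℕ} (S : Finset (Fin r × Fin r)) (T : Finset (Fin m × Fin m)) :
    (S.map (embA r m) ∪ T.map (embB r m)).card = S.card + T.card := by
  rw [Finset.card_union_of_disjoint (disj_maps S T), Finset.card_map, Finset.card_map]

end AuxProof

/-- Catalan operators obey the composition law: for any indexed
root ideals `(Ψ,μ)` of length `r` and `(Φ,ν)` of length `ℓ - r`, the composition
of operators satisfies `H^Ψ_μ ∘ H^Φ_ν = H^{Ψ⊎Φ}_{μν}` in `End_{ℤ[t]}(Λ)`. -/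
theorem catalanOp_comp (r m : ℕ)
    (Ψ : Finset (Fin r × Fin r)) (hΨ : IsRootIdeal Ψ)
    (Φ : Finset (Fin m × Fin m)) (hΦ : IsRootIdeal Φ)
    (μ : Fin r → ℤ) (ν : Fin m → ℤ) :
    catalanOp Ψ μ ∘ catalanOp Φ ν = catalanOp (uplus Ψ Φ) (Fin.append μ ν) := by
  funext f
  simp only [Function.comp_apply]
  rw [catalanOp_eq, catalanOp_eq, catalanOp_eq, compl_uplus]
  simp only [GJt_sum, GJt_C_mul, Finset.mul_sum]
  simp only [← GJt_append]
  rw [← Finset.sum_product']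
  have hAB : ∀ (T : Finset (Fin m × Fin m)) (q : Fin r × Fin r),
      embA r m q ∉ T.map (embB r m) := fun T q h =>
    Finset.disjoint_left.mp (disj_maps {q} T) (by simp) h
  have hBA : ∀ (S : Finset (Fin r × Fin r)) (q : Fin m × Fin m),
      embB r m q ∉ S.map (embA r m) := fun S q h =>
    Finset.disjoint_right.mp (disj_maps S {q}) (by simp) h
  refine Finset.sum_nbij' (fun P => P.1.map (embA r m) ∪ P.2.map (embB r m))
    (fun U => ((Dplus r \ Ψ).filter (fun q => embA r m q ∈ U),
               (Dplus m \ Φ).filter (fun q => embB r m q ∈ U))) ?_ ?_ ?_ ?_ ?_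
  · intro P hP
    rw [Finset.mem_product, Finset.mem_powerset, Finset.mem_powerset] at hP
    rw [Finset.mem_powerset]
    exact Finset.union_subset_union (Finset.map_subset_map.mpr hP.1)
      (Finset.map_subset_map.mpr hP.2)
  · intro U hU
    rw [Finset.mem_product, Finset.mem_powerset, Finset.mem_powerset]
    exact ⟨Finset.filter_subset _ _, Finset.filter_subset _ _⟩
  · intro P hP
    rw [Finset.mem_product, Finset.mem_powerset, Finset.mem_powerset] at hP
    refine Prod.ext ?_ ?_
    · ext q
      simp only [Finset.mem_filter, Finset.mem_union]
      constructor
      · rintro ⟨hqA, hq | hq⟩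
        · exact (Finset.mem_map' _).mp hq
        · exact absurd hq (hAB P.2 q)
      · intro hq
        exact ⟨hP.1 hq, Or.inl ((Finset.mem_map' _).mpr hq)⟩
    · ext q
      simp only [Finset.mem_filter, Finset.mem_union]
      constructor
      · rintro ⟨hqB, hq | hq⟩
        · exact absurd hq (hBA P.1 q)
        · exact (Finset.mem_map' _).mp hq
      · intro hq
        exact ⟨hP.2 hq, Or.inr ((Finset.mem_map' _).mpr hq)⟩
  · intro U hU
    rw [Finset.mem_powerset] at hU
    ext p
    simp only [Finset.mem_union, Finset.mem_map, Finset.mem_filter]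
    constructor
    · rintro (⟨q, ⟨_, hq⟩, rfl⟩ | ⟨q, ⟨_, hq⟩, rfl⟩) <;> exact hq
    · intro hp
      rcases Finset.mem_union.mp (hU hp) with h | h
      · obtain ⟨q, hqA, rfl⟩ := Finset.mem_map.mp h
        exact Or.inl ⟨q, ⟨hqA, hp⟩, rfl⟩
      · obtain ⟨q, hqB, rfl⟩ := Finset.mem_map.mp h
        exact Or.inr ⟨q, ⟨hqB, hp⟩, rfl⟩
  · intro P hP
    rw [shift_append μ ν P.1 P.2, card_union_maps, pow_add, map_mul, mul_assoc]

end
end
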